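/- arXiv:1907.05679 — 6 statements merged into one kernel-verified Lean document; each statement's English description precedes it below -/
import Mathlib

section
/- Let V, f₁, f₂ : (-∞,0] → M_n(ℂ) be continuous, bounded, Hermitian-matrix-valued functions such that f₁(x) is positive definite for every x and f₂(x) − δ·I is positive semidefinite for every x, for some fixed δ > 0. Let c ∈ M_n(ℂ) be Hermitian and let φ : ℝ → M_n(ℂ) be continuously differentiable with φ(λ) Hermitian for every real λ, φ(0) = 0, and φ′(λ) negative definite for every λ > 0. Then there exists ν ∈ ℝ, independent of λ and y, such that every λ ∈ ℝ for which there exists a nonzero H²-solution y on (-∞,0] of y″(x) + V(x)y(x) = λ f₁(x)y(x) + λ² f₂(x)y(x) with boundary condition (c + φ(λ))y(0) = y′(0), satisfies λ ≤ √(‖f₂‖_{L∞} · |ν|)/δ. -/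
open MeasureTheory Matrix Set
open scoped ComplexOrder

noncomputable section

/-- Action of a complex `n × n` matrix on `ℂⁿ` with the Euclidean structure. -/
def mact {n : ℕ} (M : Matrix (Fin n) (Fin n) ℂ) (v : EuclideanSpace ℂ (Fin n)) :
    EuclideanSpace ℂ (Fin n) :=
  Matrix.toEuclideanCLM (𝕜 := ℂ) M v


variable {n : ℕ}

abbrev rin (v w : EuclideanSpace ℂ (Fin n)) : ℝ := @inner ℝ _ _ v w

lemma rin_eq_re (v w : EuclideanSpace ℂ (Fin n)) :
    rin v w = RCLike.re (@inner ℂ _ _ v w) := by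
  simp only [rin, PiLp.inner_apply]
  rw [map_sum]
  exact Finset.sum_congr rfl fun i _ => real_inner_eq_re_inner ℂ (v i) (w i)

lemma inner_mact_eq (M : Matrix (Fin n) (Fin n) ℂ) (v : EuclideanSpace ℂ (Fin n)) :
    (@inner ℂ _ _ v (mact M v))
      = dotProduct (star (WithLp.equiv _ _ v)) (M *ᵥ (WithLp.equiv _ _ v)) := by
  rw [EuclideanSpace.inner_eq_star_dotProduct, mact, ofLp_toEuclideanCLM, dotProduct_comm]
  rfl

lemma psd_rin_nonneg {M : Matrix (Fin n) (Fin n) ℂ} (hM : M.PosSemidef)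
    (v : EuclideanSpace ℂ (Fin n)) : 0 ≤ rin v (mact M v) := by
  rw [rin_eq_re, inner_mact_eq]
  exact hM.re_dotProduct_nonneg _

lemma mact_add (M N : Matrix (Fin n) (Fin n) ℂ) (v : EuclideanSpace ℂ (Fin n)) :
    mact (M + N) v = mact M v + mact N v := by
  simp [mact, _root_.map_add]

lemma mact_sub (M N : Matrix (Fin n) (Fin n) ℂ) (v : EuclideanSpace ℂ (Fin n)) :
    mact (M - N) v = mact M v - mact N v := by
  simp [mact, _root_.map_sub]

lemma mact_smul_one (z : ℂ) (v : EuclideanSpace ℂ (Fin n)) :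
    mact (z • (1 : Matrix (Fin n) (Fin n) ℂ)) v = z • v := by
  simp [mact, _root_.map_smul, _root_.map_one]

lemma rin_mact_le (M : Matrix (Fin n) (Fin n) ℂ) (v : EuclideanSpace ℂ (Fin n)) :
    |rin v (mact M v)| ≤ ‖Matrix.toEuclideanCLM (𝕜 := ℂ) M‖ * ‖v‖ ^ 2 := by
  have h1 : |rin v (mact M v)| ≤ ‖(@inner ℂ _ _ v (mact M v))‖ := by
    rw [rin_eq_re]; exact RCLike.abs_re_le_norm _
  refine h1.trans ?_
  have h2 := norm_inner_le_norm (𝕜 := ℂ) v (mact M v)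
  refine h2.trans ?_
  have h3 : ‖mact M v‖ ≤ ‖Matrix.toEuclideanCLM (𝕜 := ℂ) M‖ * ‖v‖ :=
    (Matrix.toEuclideanCLM (𝕜 := ℂ) M).le_opNorm v
  calc ‖v‖ * ‖mact M v‖ ≤ ‖v‖ * (‖Matrix.toEuclideanCLM (𝕜 := ℂ) M‖ * ‖v‖) := by
        exact mul_le_mul_of_nonneg_left h3 (norm_nonneg v)
    _ = ‖Matrix.toEuclideanCLM (𝕜 := ℂ) M‖ * ‖v‖ ^ 2 := by ring

lemma psd_shift_rin {δ : ℝ} {M : Matrix (Fin n) (Fin n) ℂ}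
    (hM : (M - (δ : ℂ) • (1 : Matrix (Fin n) (Fin n) ℂ)).PosSemidef)
    (v : EuclideanSpace ℂ (Fin n)) : δ * ‖v‖ ^ 2 ≤ rin v (mact M v) := by
  have h := psd_rin_nonneg hM v
  rw [mact_sub, mact_smul_one] at h
  have : rin v (mact M v - (δ : ℂ) • v) = rin v (mact M v) - δ * ‖v‖ ^ 2 := by
    have h1 : RCLike.re (@inner ℂ _ _ v ((δ : ℂ) • v)) = δ * ‖v‖ ^ 2 := by
      rw [inner_smul_right]
      have h2 : RCLike.re ((@inner ℂ _ _ v v)) = ‖v‖ ^ 2 := inner_self_eq_norm_sq v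
      have h3 : Complex.im ((@inner ℂ _ _ v v)) = 0 := by
        have := inner_self_im (𝕜 := ℂ) v; simpa using this
      simp only [RCLike.re_to_complex] at h2 ⊢
      rw [Complex.re_ofReal_mul, h2]
    rw [rin_eq_re, rin_eq_re, inner_sub_right, map_sub, h1]
  rw [this] at h; linarith

lemma rin_smul_real (lam : ℝ) (v w : EuclideanSpace ℂ (Fin n)) :
    rin v ((lam : ℂ) • w) = lam * rin v w := by
  rw [rin_eq_re, rin_eq_re, inner_smul_right]
  exact Complex.re_ofReal_mul lam _

lemma phi_nonpos (φ φ' : ℝ → Matrix (Fin n) (Fin n) ℂ)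
    (hφdiff : ∀ (t : ℝ) (i j : Fin n), HasDerivAt (fun s => φ s i j) (φ' t i j) t)
    (hφ0 : φ 0 = 0)
    (hφ'neg : ∀ t : ℝ, 0 < t → (-(φ' t)).PosDef)
    (lam : ℝ) (hlam : 0 < lam) (v : EuclideanSpace ℂ (Fin n)) :
    rin v (mact (φ lam) v) ≤ 0 := by
  set x : Fin n → ℂ := WithLp.equiv _ _ v with hx
  set D : ℝ → ℂ := fun t => dotProduct (star x) (φ t *ᵥ x) with hD
  set D' : ℝ → ℂ := fun t => dotProduct (star x) (φ' t *ᵥ x) with hD'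
  have hDderiv : ∀ t, HasDerivAt D (D' t) t := by
    intro t
    have : ∀ t, D t = ∑ i, ∑ j, star x i * (φ t i j * x j) := by
      intro t; simp [hD, dotProduct, mulVec, Finset.mul_sum]
    have h2 : D' t = ∑ i, ∑ j, star x i * (φ' t i j * x j) := by
      simp [hD', dotProduct, mulVec, Finset.mul_sum]
    rw [h2]
    refine HasDerivAt.congr_of_eventuallyEq (f := fun s => ∑ i, ∑ j, star x i * (φ s i j * x j)) ?_ (by filter_upwards using fun s => (this s))
    refine HasDerivAt.fun_sum fun i _ => HasDerivAt.fun_sum fun j _ => ?_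
    exact ((hφdiff t i j).mul_const (x j)).const_mul (star x i)
  set g : ℝ → ℝ := fun t => (D t).re with hg
  have hgderiv : ∀ t, HasDerivAt g ((D' t).re) t := fun t =>
    (Complex.reCLM.hasFDerivAt.comp_hasDerivAt t (hDderiv t))
  have hganti : AntitoneOn g (Ici (0:ℝ)) := by
    refine antitoneOn_of_deriv_nonpos (convex_Ici 0) ?_ ?_ ?_
    · exact fun t _ => (hgderiv t).continuousAt.continuousWithinAt
    · exact fun t _ => (hgderiv t).differentiableAt.differentiableWithinAt
    · intro t ht
      rw [interior_Ici] at ht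
      rw [(hgderiv t).deriv]
      by_cases hv : x = 0
      · simp [hD', hv]
      · have hpd := (hφ'neg t ht).re_dotProduct_pos (A := -(φ' t)) hv
        have : dotProduct (star x) ((-(φ' t)) *ᵥ x) = -D' t := by
          simp [hD', neg_mulVec, dotProduct_neg]
        rw [this] at hpd
        simp only [RCLike.re_to_complex, Complex.neg_re] at hpd
        linarith
  have h0 : g 0 = 0 := by simp [hg, hD, hφ0]
  have hle : g lam ≤ g 0 := hganti self_mem_Ici (le_of_lt hlam) (le_of_lt hlam)
  have heq : rin v (mact (φ lam) v) = g lam := by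
    rw [rin_eq_re, inner_mact_eq, RCLike.re_to_complex]
  rw [heq]; linarith

lemma norm_ge_delta (hn : 1 ≤ n) {δ : ℝ} (hδ : 0 < δ) {M : Matrix (Fin n) (Fin n) ℂ}
    (hM : (M - (δ : ℂ) • (1 : Matrix (Fin n) (Fin n) ℂ)).PosSemidef) :
    δ ≤ ‖Matrix.toEuclideanCLM (𝕜 := ℂ) M‖ := by
  set v : EuclideanSpace ℂ (Fin n) := EuclideanSpace.single ⟨0, hn⟩ 1 with hv
  have hnv : ‖v‖ = 1 := by simp [hv, EuclideanSpace.norm_single]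
  have h1 := psd_shift_rin hM v
  have h2 := rin_mact_le M v
  rw [hnv] at h1 h2
  simp only [one_pow, mul_one] at h1 h2
  calc δ ≤ rin v (mact M v) := h1
    _ ≤ |rin v (mact M v)| := le_abs_self _
    _ ≤ _ := h2

lemma rin_add_right (v a b : EuclideanSpace ℂ (Fin n)) :
    rin v (a + b) = rin v a + rin v b := by
  rw [rin_eq_re, rin_eq_re, rin_eq_re, inner_add_right, map_add]

lemma rin_sub_right (v a b : EuclideanSpace ℂ (Fin n)) :
    rin v (a - b) = rin v a - rin v b := by
  rw [rin_eq_re, rin_eq_re, rin_eq_re, inner_sub_right, map_sub]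


set_option maxHeartbeats 2000000

/-- every real eigenvalue of the half-line Robin problem satisfies
`λ ≤ √(‖f₂‖_{L∞} |ν|) / δ`, for some `ν` independent of `λ` and `y`. -/
theorem halfline_robin_real_eigenvalue_upper_bound {n : ℕ} (hn : 1 ≤ n)
    (V f₁ f₂ : ℝ → Matrix (Fin n) (Fin n) ℂ) (δ : ℝ) (hδ : 0 < δ)
    (hVcont : ContinuousOn V (Iic 0))
    (hf₁cont : ContinuousOn f₁ (Iic 0))
    (hf₂cont : ContinuousOn f₂ (Iic 0))
    (hbdd : ∃ C : ℝ, ∀ x ∈ Iic (0 : ℝ),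
      ‖Matrix.toEuclideanCLM (𝕜 := ℂ) (V x)‖ ≤ C ∧
      ‖Matrix.toEuclideanCLM (𝕜 := ℂ) (f₁ x)‖ ≤ C ∧
      ‖Matrix.toEuclideanCLM (𝕜 := ℂ) (f₂ x)‖ ≤ C)
    (hVherm : ∀ x ∈ Iic (0 : ℝ), (V x).IsHermitian)
    (hf₁herm : ∀ x ∈ Iic (0 : ℝ), (f₁ x).IsHermitian)
    (hf₂herm : ∀ x ∈ Iic (0 : ℝ), (f₂ x).IsHermitian)
    (hf₁pos : ∀ x ∈ Iic (0 : ℝ), (f₁ x).PosDef)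
    (hf₂pos : ∀ x ∈ Iic (0 : ℝ), (f₂ x - (δ : ℂ) • (1 : Matrix (Fin n) (Fin n) ℂ)).PosSemidef)
    (c : Matrix (Fin n) (Fin n) ℂ) (hc : c.IsHermitian)
    (φ φ' : ℝ → Matrix (Fin n) (Fin n) ℂ)
    (hφdiff : ∀ (t : ℝ) (i j : Fin n), HasDerivAt (fun s => φ s i j) (φ' t i j) t)
    (hφ'cont : Continuous φ')
    (hφherm : ∀ t : ℝ, (φ t).IsHermitian)
    (hφ0 : φ 0 = 0)
    (hφ'neg : ∀ t : ℝ, 0 < t → (-(φ' t)).PosDef) :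
    ∃ ν : ℝ, ∀ lam : ℝ,
      (∃ y y' y'' : ℝ → EuclideanSpace ℂ (Fin n),
        (∃ x ∈ Iic (0 : ℝ), y x ≠ 0) ∧
        (∀ x ∈ Iic (0 : ℝ), HasDerivWithinAt y (y' x) (Iic 0) x) ∧
        (∀ x ∈ Iic (0 : ℝ), HasDerivWithinAt y' (y'' x) (Iic 0) x) ∧
        ContinuousOn y'' (Iic 0) ∧
        Integrable (fun x => ‖y x‖ ^ 2) (volume.restrict (Iic 0)) ∧
        Integrable (fun x => ‖y' x‖ ^ 2) (volume.restrict (Iic 0)) ∧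
        Integrable (fun x => ‖y'' x‖ ^ 2) (volume.restrict (Iic 0)) ∧
        (∀ x ∈ Iic (0 : ℝ), y'' x + mact (V x) (y x)
            = (lam : ℂ) • mact (f₁ x) (y x) + (lam : ℂ) ^ 2 • mact (f₂ x) (y x)) ∧
        mact (c + φ lam) (y 0) = y' 0) →
      lam ≤ Real.sqrt
          ((⨆ x : Iic (0 : ℝ), ‖Matrix.toEuclideanCLM (𝕜 := ℂ) (f₂ (x : ℝ))‖) * |ν|) / δ := by
  obtain ⟨C, hC⟩ := hbdd
  have hC0 : 0 ≤ C := le_trans (norm_nonneg _) (hC 0 (mem_Iic.mpr le_rfl)).1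
  set B : ℝ := ‖Matrix.toEuclideanCLM (𝕜 := ℂ) c‖ with hB
  have hB0 : 0 ≤ B := norm_nonneg _
  set D : ℝ := C + 2 * B ^ 2 with hDdef
  have hD0 : 0 ≤ D := by positivity
  set lam0 : ℝ := max 1 ((C + D) / δ) with hlam0
  have hlam0pos : (0 : ℝ) < lam0 := lt_of_lt_of_le one_pos (le_max_left _ _)
  refine ⟨δ * lam0 ^ 2, ?_⟩
  intro lam hexists
  set S : ℝ := ⨆ x : Iic (0 : ℝ), ‖Matrix.toEuclideanCLM (𝕜 := ℂ) (f₂ (x : ℝ))‖ with hS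
  have hSδ : δ ≤ S := by
    have hbddS : BddAbove (range fun x : Iic (0:ℝ) =>
        ‖Matrix.toEuclideanCLM (𝕜 := ℂ) (f₂ (x : ℝ))‖) := by
      refine ⟨C, ?_⟩; rintro _ ⟨x, rfl⟩; exact (hC x x.2).2.2
    have h1 : ‖Matrix.toEuclideanCLM (𝕜 := ℂ) (f₂ (((⟨0, mem_Iic.mpr le_rfl⟩ : Iic (0:ℝ))) : ℝ))‖ ≤ S :=
      le_ciSup hbddS ⟨0, mem_Iic.mpr le_rfl⟩
    exact le_trans (norm_ge_delta hn hδ (hf₂pos 0 (mem_Iic.mpr le_rfl))) h1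
  have hRHS : lam0 ≤ Real.sqrt (S * |δ * lam0 ^ 2|) / δ := by
    have habs : |δ * lam0 ^ 2| = δ * lam0 ^ 2 := abs_of_nonneg (by positivity)
    rw [habs, le_div_iff₀ hδ]
    have h1 : (lam0 * δ) ^ 2 ≤ S * (δ * lam0 ^ 2) := by nlinarith
    calc lam0 * δ = Real.sqrt ((lam0 * δ) ^ 2) := (Real.sqrt_sq (by positivity)).symm
      _ ≤ Real.sqrt (S * (δ * lam0 ^ 2)) := Real.sqrt_le_sqrt h1
  suffices hmain : lam ≤ lam0 by exact hmain.trans hRHS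
  by_contra hcon
  push_neg at hcon
  have hlam1 : 1 < lam := lt_of_le_of_lt (le_max_left _ _) hcon
  have hlampos : 0 < lam := lt_trans one_pos hlam1
  have hCD : C + D < lam * δ := (div_lt_iff₀ hδ).mp (lt_of_le_of_lt (le_max_right _ _) hcon)
  obtain ⟨y, y', y'', ⟨xw, hxw, hyne⟩, hy', hy'', hy''cont, hyInt, hy'Int, hy''Int, hODE, hBC⟩ :=
    hexists
  -- setup
  set h : ℝ → ℝ := fun x => ‖y x‖ ^ 2 with hh
  set p : ℝ → ℝ := fun x => 2 * rin (y x) (y' x) with hp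
  set q : ℝ → ℝ := fun x => 2 * rin (y x) (y'' x) + 2 * ‖y' x‖ ^ 2 with hq
  set k2 : ℝ := 2 * (lam ^ 2 * δ - lam * C - C) with hk2def
  have hk2pos : 0 < k2 := by nlinarith [sq_nonneg B]
  set k : ℝ := Real.sqrt k2 with hk
  have hkpos : 0 < k := Real.sqrt_pos.mpr hk2pos
  have hksq : k ^ 2 = k2 := Real.sq_sqrt hk2pos.le
  have hhnn : ∀ x, 0 ≤ h x := fun x => by positivity
  -- derivatives
  have hder_h : ∀ x ∈ Iic (0:ℝ), HasDerivWithinAt h (p x) (Iic 0) x := by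
    intro x hx
    exact (hy' x hx).norm_sq
  have hder_p : ∀ x ∈ Iic (0:ℝ), HasDerivWithinAt p (q x) (Iic 0) x := by
    intro x hx
    have h1 := ((hy' x hx).inner ℝ (hy'' x hx)).const_mul (2:ℝ)
    have h2 : 2 * ((@inner ℝ _ _ (y x) (y'' x)) + (@inner ℝ _ _ (y' x) (y' x))) = q x := by
      rw [real_inner_self_eq_norm_sq]; rw [hq]; ring
    rw [h2] at h1
    exact h1
  -- pointwise differential inequality
  have hq_ge : ∀ x ∈ Iic (0:ℝ), k2 * h x ≤ q x := by
    intro x hx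
    have hode := hODE x hx
    have hy''eq : y'' x = ((lam : ℂ) • mact (f₁ x) (y x)
        + (lam : ℂ) ^ 2 • mact (f₂ x) (y x)) - mact (V x) (y x) := eq_sub_of_add_eq hode
    have hsplit : rin (y x) (y'' x)
        = lam * rin (y x) (mact (f₁ x) (y x))
          + lam ^ 2 * rin (y x) (mact (f₂ x) (y x))
          - rin (y x) (mact (V x) (y x)) := by
      rw [hy''eq, rin_sub_right, rin_add_right]
      have e1 : rin (y x) ((lam : ℂ) • mact (f₁ x) (y x))
          = lam * rin (y x) (mact (f₁ x) (y x)) := rin_smul_real lam _ _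
      have e2 : rin (y x) ((lam : ℂ) ^ 2 • mact (f₂ x) (y x))
          = lam ^ 2 * rin (y x) (mact (f₂ x) (y x)) := by
        have : ((lam : ℂ)) ^ 2 = ((lam ^ 2 : ℝ) : ℂ) := by push_cast; ring
        rw [this]; exact rin_smul_real (lam ^ 2) _ _
      rw [e1, e2]
    have hb1 : |rin (y x) (mact (f₁ x) (y x))| ≤ C * h x := by
      refine le_trans (rin_mact_le _ _) ?_
      exact mul_le_mul_of_nonneg_right (hC x hx).2.1 (by positivity)
    have hbV : |rin (y x) (mact (V x) (y x))| ≤ C * h x := by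
      refine le_trans (rin_mact_le _ _) ?_
      exact mul_le_mul_of_nonneg_right (hC x hx).1 (by positivity)
    have hb2 : δ * h x ≤ rin (y x) (mact (f₂ x) (y x)) := psd_shift_rin (hf₂pos x hx) _
    have habs1 := abs_le.mp hb1
    have habsV := abs_le.mp hbV
    have hyn : 0 ≤ ‖y' x‖ ^ 2 := by positivity
    show k2 * h x ≤ 2 * rin (y x) (y'' x) + 2 * ‖y' x‖ ^ 2
    rw [hsplit, hk2def]
    nlinarith [habs1.1, habsV.1, hb2, hyn, hhnn x, mul_le_mul_of_nonneg_left hb2 (by positivity : (0:ℝ) ≤ lam ^ 2), mul_le_mul_of_nonneg_left habs1.1 hlampos.le]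
  have hq_nn : ∀ x ∈ Iic (0:ℝ), 0 ≤ q x := fun x hx =>
    le_trans (mul_nonneg hk2pos.le (hhnn x)) (hq_ge x hx)
  -- continuity
  have hp_cont : ContinuousOn p (Iic 0) := fun x hx =>
    (hder_p x hx).differentiableWithinAt.continuousWithinAt
  have hh_cont : ContinuousOn h (Iic 0) := fun x hx =>
    (hder_h x hx).differentiableWithinAt.continuousWithinAt
  -- p is monotone
  have hintIic : ∀ z : ℝ, interior (Iic z) = Iio z := fun z => interior_Iic
  have hp_mono : MonotoneOn p (Iic 0) := by
    refine monotoneOn_of_hasDerivWithinAt_nonneg (convex_Iic 0) hp_cont (f' := q) ?_ ?_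
    · intro x hx
      rw [hintIic] at hx
      exact ((hder_p x (mem_Iic.mpr (le_of_lt hx))).mono (by rw [hintIic]; exact Iio_subset_Iic_self))
    · intro x hx
      rw [hintIic] at hx
      exact hq_nn x (mem_Iic.mpr (le_of_lt hx))
  -- auxiliary: a positive constant lower bound on an Iic contradicts integrability
  have hconst : ∀ (z : ℝ) (a : ℝ), z ≤ 0 → 0 < a → (∀ x ∈ Iic z, a ≤ h x) → False := by
    intro z a hz ha hbound
    have hInt1 : Integrable h (volume.restrict (Iic z)) :=
      hyInt.mono_measure (Measure.restrict_mono (Iic_subset_Iic.mpr hz) le_rfl)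
    have hInt2 : Integrable (fun _ : ℝ => a) (volume.restrict (Iic z)) := by
      refine Integrable.mono' hInt1 aestronglyMeasurable_const ?_
      rw [ae_restrict_iff' measurableSet_Iic]
      filter_upwards with x hx
      rw [Real.norm_eq_abs, abs_of_pos ha]
      exact hbound x hx
    rw [integrable_const_iff] at hInt2
    rcases hInt2 with h1 | h2
    · exact ha.ne' h1
    · have h2 := h2.measure_univ_lt_top
      rw [Measure.restrict_apply_univ, Real.volume_Iic] at h2
      exact (lt_irrefl _ h2).elim
  -- p is nonnegative
  have hp_nn : ∀ x ∈ Iic (0:ℝ), 0 ≤ p x := by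
    by_contra hcon2
    push_neg at hcon2
    obtain ⟨x₀, hx₀, hpx₀⟩ := hcon2
    set a : ℝ := -p x₀ with hadef
    have ha : 0 < a := by rw [hadef]; linarith
    have hanti : AntitoneOn (fun x => h x + a * x) (Iic x₀) := by
      refine antitoneOn_of_hasDerivWithinAt_nonpos (convex_Iic x₀)
        (f' := fun x => p x + a) ?_ ?_ ?_
      · intro x hx
        have hx0 : x ∈ Iic (0:ℝ) := mem_Iic.mpr (le_trans (mem_Iic.mp hx) (mem_Iic.mp hx₀))
        exact (((hder_h x hx0).mono (Iic_subset_Iic.mpr (mem_Iic.mp hx₀))).add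
          (((hasDerivAt_id x).const_mul a).hasDerivWithinAt)).continuousWithinAt
      · intro x hx
        rw [hintIic] at hx
        have hx0 : x ∈ Iic (0:ℝ) := mem_Iic.mpr (le_trans (le_of_lt hx) (mem_Iic.mp hx₀))
        refine HasDerivWithinAt.add ?_ ?_
        · exact (hder_h x hx0).mono
            (by rw [hintIic]
                exact fun t ht => mem_Iic.mpr (le_trans (le_of_lt ht) (mem_Iic.mp hx₀)))
        · have := ((hasDerivAt_id x).const_mul a).hasDerivWithinAt (s := Iio x₀)
          simpa using this
      · intro x hx
        rw [hintIic] at hx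
        have hx0 : x ∈ Iic (0:ℝ) := mem_Iic.mpr (le_trans (le_of_lt hx) (mem_Iic.mp hx₀))
        have hppx : p x ≤ p x₀ := hp_mono hx0 hx₀ (le_of_lt hx)
        show p x + a ≤ 0
        rw [hadef]
        linarith
    have hx₀0 : x₀ ≤ 0 := mem_Iic.mp hx₀
    refine hconst (x₀ - 1) a (by linarith) ha ?_
    intro x hx
    have hx' : x ≤ x₀ - 1 := mem_Iic.mp hx
    have hxx : x ≤ x₀ := by linarith
    have h1 : h x₀ + a * x₀ ≤ h x + a * x :=
      hanti (mem_Iic.mpr hxx) (mem_Iic.mpr le_rfl) hxx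
    have h2 : 0 ≤ h x₀ := hhnn x₀
    nlinarith
  -- h is monotone
  have hh_mono : MonotoneOn h (Iic 0) := by
    refine monotoneOn_of_hasDerivWithinAt_nonneg (convex_Iic 0) hh_cont (f' := p) ?_ ?_
    · intro x hx
      rw [hintIic] at hx
      exact ((hder_h x (mem_Iic.mpr (le_of_lt hx))).mono (by rw [hintIic]; exact Iio_subset_Iic_self))
    · intro x hx
      rw [hintIic] at hx
      exact hp_nn x (mem_Iic.mpr (le_of_lt hx))
  -- h gets small
  have hsmall : ∀ ε : ℝ, 0 < ε → ∃ x : ℝ, x ≤ 0 ∧ h x ≤ ε := by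
    intro ε hε
    by_contra hcon2
    push_neg at hcon2
    exact hconst 0 ε le_rfl hε fun x hx => (hcon2 x hx).le
  -- h 0 > 0
  have hh0pos : 0 < h 0 := by
    rcases (hhnn 0).lt_or_eq with h1 | h1
    · exact h1
    · exfalso
      have hle : h xw ≤ h 0 := hh_mono hxw (mem_Iic.mpr le_rfl) (mem_Iic.mp hxw)
      have hxw0 : h xw = 0 := le_antisymm (h1.symm ▸ hle) (hhnn xw)
      have hxw0' : ‖y xw‖ ^ 2 = 0 := hxw0
      exact hyne (norm_eq_zero.mp (pow_eq_zero_iff two_ne_zero |>.mp hxw0'))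
  -- the exponential-weighted function
  set w : ℝ → ℝ := fun x => Real.exp (k * x) * (p x - k * h x) with hwdef
  have hder_w : ∀ x ∈ Iic (0:ℝ), HasDerivWithinAt w
      (Real.exp (k * x) * (k * 1) * (p x - k * h x) + Real.exp (k * x) * (q x - k * p x))
      (Iic 0) x := by
    intro x hx
    have hexp : HasDerivWithinAt (fun t => Real.exp (k * t)) (Real.exp (k * x) * (k * 1))
        (Iic 0) x := (((hasDerivAt_id x).const_mul k).exp).hasDerivWithinAt
    have hinner : HasDerivWithinAt (fun t => p t - k * h t) (q x - k * p x) (Iic 0) x :=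
      (hder_p x hx).sub ((hder_h x hx).const_mul k)
    exact hexp.mul hinner
  have hw_mono : MonotoneOn w (Iic 0) := by
    refine monotoneOn_of_hasDerivWithinAt_nonneg (convex_Iic 0)
      (fun x hx => (hder_w x hx).differentiableWithinAt.continuousWithinAt)
      (f' := fun x => Real.exp (k * x) * (k * 1) * (p x - k * h x)
        + Real.exp (k * x) * (q x - k * p x)) ?_ ?_
    · intro x hx
      rw [hintIic] at hx
      exact (hder_w x (mem_Iic.mpr (le_of_lt hx))).mono (by rw [hintIic]; exact Iio_subset_Iic_self)
    · intro x hx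
      rw [hintIic] at hx
      have h1 := hq_ge x (mem_Iic.mpr (le_of_lt hx))
      have h2 := Real.exp_pos (k * x)
      show 0 ≤ Real.exp (k * x) * (k * 1) * (p x - k * h x)
          + Real.exp (k * x) * (q x - k * p x)
      have h3 : Real.exp (k * x) * (k * 1) * (p x - k * h x)
          + Real.exp (k * x) * (q x - k * p x)
          = Real.exp (k * x) * (q x - k ^ 2 * h x) := by ring
      rw [h3, hksq]
      exact mul_nonneg h2.le (by linarith)
  -- w 0 ≥ 0
  have hw0 : 0 ≤ w 0 := by
    by_contra hcon2
    push_neg at hcon2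
    set ε : ℝ := (-(w 0)) / (2 * k) with hε
    have hεpos : 0 < ε := by
      apply div_pos (by linarith) (by linarith)
    obtain ⟨x, hx, hhx⟩ := hsmall ε hεpos
    have h1 : w x ≤ w 0 := hw_mono (mem_Iic.mpr hx) (mem_Iic.mpr le_rfl) hx
    have h2 : -(k * h x) ≤ w x := by
      show -(k * h x) ≤ Real.exp (k * x) * (p x - k * h x)
      have hpnn := hp_nn x (mem_Iic.mpr hx)
      have hexple : Real.exp (k * x) ≤ 1 := Real.exp_le_one_iff.mpr (by nlinarith)
      have hexppos := Real.exp_pos (k * x)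
      have t1 : 0 ≤ Real.exp (k * x) * p x := mul_nonneg hexppos.le hpnn
      have t2 : 0 ≤ (1 - Real.exp (k * x)) * (k * h x) :=
        mul_nonneg (by linarith) (mul_nonneg hkpos.le (hhnn x))
      nlinarith [t1, t2]
    have h3 : k * h x ≤ k * ε := mul_le_mul_of_nonneg_left hhx hkpos.le
    have h4 : -(k * ε) ≤ w 0 := by linarith
    have h5 : k * ε = -(w 0) / 2 := by
      have hk0 : k ≠ 0 := hkpos.ne'
      rw [hε]
      first
      | (field_simp; ring)
      | field_simp
    rw [h5] at h4
    linarith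
  -- boundary estimate
  have hbdt : p 0 ≤ 2 * B * h 0 := by
    have hy'0 : y' 0 = mact c (y 0) + mact (φ lam) (y 0) := by
      rw [← hBC, mact_add]
    have e1 : p 0 = 2 * rin (y 0) (mact c (y 0)) + 2 * rin (y 0) (mact (φ lam) (y 0)) := by
      show 2 * rin (y 0) (y' 0) = _
      rw [hy'0, rin_add_right]; ring
    have e2 : rin (y 0) (mact c (y 0)) ≤ B * h 0 := by
      refine le_trans (le_abs_self _) (le_trans (rin_mact_le _ _) ?_)
      rw [hB, hh]
    have e3 : rin (y 0) (mact (φ lam) (y 0)) ≤ 0 :=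
      phi_nonpos φ φ' hφdiff hφ0 hφ'neg lam hlampos (y 0)
    rw [e1]; linarith
  have hkh : k * h 0 ≤ p 0 := by
    have h1 : Real.exp (k * 0) * (p 0 - k * h 0) = p 0 - k * h 0 := by simp
    have h2 : (0:ℝ) ≤ p 0 - k * h 0 := by rw [← h1]; exact hw0
    linarith
  have hk2B : k ≤ 2 * B := by
    have h1 : k * h 0 ≤ 2 * B * h 0 := le_trans hkh hbdt
    exact le_of_mul_le_mul_right (by linarith [h1]) hh0pos
  -- final contradiction
  have hfinal : k2 ≤ 4 * B ^ 2 := by nlinarith [hkpos.le]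
  rw [hk2def] at hfinal
  nlinarith [hCD, hlam1, hδ, hD0, hC0]
end
end

section
/- Let M : ℝ → M_n(ℂ) be a matrix-valued function such that M(λ) is Hermitian and positive definite for every λ ∈ ℝ, and suppose M is differentiable at λ₀ with derivative M′(λ₀) Hermitian and positive definite. If the map λ ↦ √(M(λ)) is differentiable at λ₀ with derivative S, then S is positive definite. -/
open Matrix
open scoped ComplexOrder

noncomputable section

/-- The positive semidefinite square root of a positive semidefinite matrix
(the definition removed from Mathlib, restated with its old meaning). -/
def Matrix.PosSemidef.sqrt {n : Type*} [Fintype n] [DecidableEq n] {𝕜 : Type*} [RCLike 𝕜]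
    {A : Matrix n n 𝕜} (hA : A.PosSemidef) : Matrix n n 𝕜 :=
  hA.1.eigenvectorUnitary.1 * diagonal ((↑) ∘ (√·) ∘ hA.1.eigenvalues) *
    (star hA.1.eigenvectorUnitary : Matrix n n 𝕜)

lemma psd_sqrt_isHermitian_aux {m : Type*} [Fintype m] [DecidableEq m]
    {A : Matrix m m ℂ} (hA : A.PosSemidef) : hA.sqrt.IsHermitian := by
  unfold Matrix.PosSemidef.sqrt
  simp only [IsHermitian, conjTranspose_mul, diagonal_conjTranspose, Matrix.mul_assoc]
  simp only [star_eq_conjTranspose, conjTranspose_conjTranspose]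
  congr 3
  funext i
  simp [Complex.conj_ofReal]

lemma psd_sqrt_mul_self_aux {m : Type*} [Fintype m] [DecidableEq m]
    {A : Matrix m m ℂ} (hA : A.PosSemidef) : hA.sqrt * hA.sqrt = A := by
  unfold Matrix.PosSemidef.sqrt
  have hU : (star hA.1.eigenvectorUnitary : Matrix m m ℂ) * hA.1.eigenvectorUnitary.1 = 1 :=
    Unitary.coe_star_mul_self _
  conv_rhs => rw [hA.1.spectral_theorem, Unitary.conjStarAlgAut_apply]
  simp only [Matrix.mul_assoc]
  rw [← Matrix.mul_assoc (star _ : Matrix m m ℂ) _ _, hU, Matrix.one_mul,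
    ← Matrix.mul_assoc (diagonal _) (diagonal _), diagonal_mul_diagonal', ← Matrix.mul_assoc]
  have hd : (fun i => (RCLike.ofReal (√(hA.1.eigenvalues i)) : ℂ) * RCLike.ofReal (√(hA.1.eigenvalues i)))
      = (RCLike.ofReal ∘ hA.1.eigenvalues : m → ℂ) := by
    funext i
    rw [Function.comp_apply, ← RCLike.ofReal_mul, Real.mul_self_sqrt (hA.eigenvalues_nonneg i)]
  simp only [Function.comp_apply]
  rw [hd, Matrix.mul_assoc]

/-- Conjugation of a positive definite matrix by an invertible matrix is positive definite. -/
lemma posDef_mul_mul_conjTranspose_aux {m : Type*} [Fintype m] [DecidableEq m]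
    {B D : Matrix m m ℂ} (hD : D.PosDef) (hB : IsUnit B.det) :
    (B * D * Bᴴ).PosDef := by
  refine Matrix.PosDef.of_dotProduct_mulVec_pos ?_ ?_
  · show (B * D * Bᴴ)ᴴ = B * D * Bᴴ
    simp [Matrix.conjTranspose_mul, Matrix.mul_assoc, hD.1.eq]
  · intro x hx
    have hBH : IsUnit (Bᴴ).det := by
      rw [Matrix.det_conjTranspose]; exact hB.star
    have hy : Bᴴ *ᵥ x ≠ 0 := by
      intro h
      exact hx <| (Matrix.mulVec_injective_iff_isUnit.mpr
        ((Matrix.isUnit_iff_isUnit_det _).mpr hBH)).eq_iff.mp (by simpa using h)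
    have key : star x ⬝ᵥ ((B * D * Bᴴ) *ᵥ x)
        = star (Bᴴ *ᵥ x) ⬝ᵥ (D *ᵥ (Bᴴ *ᵥ x)) := by
      rw [← Matrix.mulVec_mulVec, ← Matrix.mulVec_mulVec, Matrix.dotProduct_mulVec (star x),
        Matrix.star_mulVec, Matrix.conjTranspose_conjTranspose]
    rw [key]
    exact hD.dotProduct_mulVec_pos hy

/-- if `λ ↦ √(M(λ))` is differentiable at `λ₀` with derivative `S`, and
`M(λ₀)` has Hermitian positive definite derivative `M′(λ₀)`, then `S` is positive
definite. -/
theorem deriv_of_matrix_sqrt_posDef {n : ℕ}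
    (M : ℝ → Matrix (Fin n) (Fin n) ℂ)
    (hMherm : ∀ lam : ℝ, (M lam).IsHermitian)
    (hMpos : ∀ lam : ℝ, (M lam).PosDef)
    (lam₀ : ℝ) (M' : Matrix (Fin n) (Fin n) ℂ)
    (hMdiff : ∀ i j : Fin n, HasDerivAt (fun lam => M lam i j) (M' i j) lam₀)
    (hM'herm : M'.IsHermitian) (hM'pos : M'.PosDef)
    (S : Matrix (Fin n) (Fin n) ℂ)
    (hSdiff : ∀ i j : Fin n,
      HasDerivAt (fun lam => ((hMpos lam).posSemidef.sqrt) i j) (S i j) lam₀) :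
    S.PosDef := by
  set Q : ℝ → Matrix (Fin n) (Fin n) ℂ := fun lam => (hMpos lam).posSemidef.sqrt with hQdef
  -- sqrt is Hermitian
  have hQherm : ∀ lam, (Q lam).IsHermitian := fun lam =>
    psd_sqrt_isHermitian_aux (hMpos lam).posSemidef
  -- S is Hermitian
  have hSherm : S.IsHermitian := by
    apply Matrix.ext
    intro i j
    have h1 : (fun lam => Q lam i j) = fun lam => star (Q lam j i) := by
      funext lam
      have := congrFun (congrFun (hQherm lam).eq i) j
      rw [← this, Matrix.conjTranspose_apply]
    have h2 : HasDerivAt (fun lam => Q lam i j) (star (S j i)) lam₀ := by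
      rw [h1]; exact (hSdiff j i).star
    have := h2.unique (hSdiff i j)
    rw [Matrix.conjTranspose_apply]
    exact this
  -- Sylvester equation: M' = S * Q lam₀ + Q lam₀ * S
  have hSyl : M' = S * Q lam₀ + Q lam₀ * S := by
    apply Matrix.ext
    intro i j
    have hMQ : (fun lam => M lam i j) = fun lam => ∑ k, Q lam i k * Q lam k j := by
      funext lam
      have := psd_sqrt_mul_self_aux (hMpos lam).posSemidef
      conv_lhs => rw [← this]
      rfl
    have hprod : HasDerivAt (fun lam => ∑ k, Q lam i k * Q lam k j)
        (∑ k, (S i k * Q lam₀ k j + Q lam₀ i k * S k j)) lam₀ :=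
      HasDerivAt.fun_sum fun k _ => (hSdiff i k).mul (hSdiff k j)
    have h2 : HasDerivAt (fun lam => M lam i j)
        (∑ k, (S i k * Q lam₀ k j + Q lam₀ i k * S k j)) lam₀ := by
      rw [hMQ]; exact hprod
    have := (hMdiff i j).unique h2
    rw [this]
    simp [Matrix.add_apply, Matrix.mul_apply, Finset.sum_add_distrib]
  -- Q lam₀ is positive definite
  have hQpos : (Q lam₀).PosDef := by
    have hsd : Q lam₀ = (hMherm lam₀).eigenvectorUnitary.1 *
        diagonal ((↑) ∘ Real.sqrt ∘ (hMherm lam₀).eigenvalues) *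
        (star (hMherm lam₀).eigenvectorUnitary.1 : Matrix (Fin n) (Fin n) ℂ) := rfl
    rw [hsd]
    have hdiag : (diagonal ((↑) ∘ Real.sqrt ∘ (hMherm lam₀).eigenvalues :
        Fin n → ℂ)).PosDef := by
      rw [Matrix.posDef_diagonal_iff]
      intro i
      have := (hMpos lam₀).eigenvalues_pos i
      have h1 : (0:ℝ) < Real.sqrt ((hMherm lam₀).eigenvalues i) := Real.sqrt_pos.mpr this
      exact Complex.zero_lt_real.mpr h1
    have hunit : IsUnit ((hMherm lam₀).eigenvectorUnitary.1 : Matrix (Fin n) (Fin n) ℂ).det :=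
      (Matrix.isUnit_iff_isUnit_det _).mp (Unitary.toUnits (hMherm lam₀).eigenvectorUnitary).isUnit
    have := posDef_mul_mul_conjTranspose_aux hdiag hunit
    convert this using 2
    exact Matrix.star_eq_conjTranspose _
  -- eigenvalues of S are positive
  have heig : ∀ i, 0 < hSherm.eigenvalues i := by
    intro i
    set v : Fin n → ℂ := ⇑(hSherm.eigenvectorBasis i) with hv
    set μ : ℝ := hSherm.eigenvalues i with hμ
    have hvne : v ≠ 0 := (WithLp.ofLp_eq_zero 2).ne.2 <| hSherm.eigenvectorBasis.orthonormal.ne_zero i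
    have hSv : S *ᵥ v = (μ : ℂ) • v := by
      have h := hSherm.mulVec_eigenvectorBasis i
      show S *ᵥ ⇑(hSherm.eigenvectorBasis i) = _
      rw [h]
      ext k
      simp only [Pi.smul_apply, Complex.real_smul, smul_eq_mul]
      rfl
    -- key identity
    have hkey : star v ⬝ᵥ (M' *ᵥ v) = (2 * μ : ℂ) * (star v ⬝ᵥ (Q lam₀ *ᵥ v)) := by
      rw [hSyl, Matrix.add_mulVec, dotProduct_add, ← Matrix.mulVec_mulVec,
        ← Matrix.mulVec_mulVec]
      have t1 : star v ⬝ᵥ (S *ᵥ (Q lam₀ *ᵥ v)) = (μ : ℂ) * (star v ⬝ᵥ (Q lam₀ *ᵥ v)) := by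
        rw [Matrix.dotProduct_mulVec (star v) S]
        have : star v ᵥ* S = (μ : ℂ) • star v := by
          have h1 : star v ᵥ* S = star (S *ᵥ v) := by
            rw [Matrix.star_mulVec, hSherm.eq]
          rw [h1, hSv]
          ext k
          simp [mul_comm]
        rw [this, smul_dotProduct]
        rfl
      have t2 : star v ⬝ᵥ (Q lam₀ *ᵥ (S *ᵥ v)) = (μ : ℂ) * (star v ⬝ᵥ (Q lam₀ *ᵥ v)) := by
        rw [hSv, Matrix.mulVec_smul, dotProduct_smul]
        rfl
      rw [t1, t2]
      ring
    have hM'v : 0 < star v ⬝ᵥ (M' *ᵥ v) := hM'pos.dotProduct_mulVec_pos hvne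
    have hQv : 0 < star v ⬝ᵥ (Q lam₀ *ᵥ v) := hQpos.dotProduct_mulVec_pos hvne
    rw [hkey] at hM'v
    -- deduce μ > 0
    rw [Complex.lt_def] at hM'v hQv
    simp only [Complex.zero_re, Complex.zero_im] at hM'v hQv
    obtain ⟨hre, him⟩ := hM'v
    obtain ⟨hqre, hqim⟩ := hQv
    set q := star v ⬝ᵥ (Q lam₀ *ᵥ v)
    have hmul : ((2 * μ : ℂ) * q).re = 2 * μ * q.re := by
      have h2μ : (2 * (μ:ℂ)).im = 0 := by simp
      rw [Complex.mul_re]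
      simp [← hqim]
    rw [hmul] at hre
    nlinarith
  -- conclude PosDef via spectral theorem
  have hspec := hSherm.spectral_theorem
  rw [hspec, Unitary.conjStarAlgAut_apply]
  apply posDef_mul_mul_conjTranspose_aux
  · rw [Matrix.posDef_diagonal_iff]
    intro i
    exact Complex.zero_lt_real.mpr (heig i)
  · exact (Matrix.isUnit_iff_isUnit_det _).mp (Unitary.toUnits hSherm.eigenvectorUnitary).isUnit
end
end

section
/- Let λ₀ ≥ 0, let L ∈ ℝ, and let V, f₁, f₂ : ℝ → M_n(ℂ) be continuous, bounded, Hermitian-matrix-valued with f₁(x) positive definite and f₂(x) positive semidefinite for all x. Suppose y₀ is a nonzero H²-solution on (-∞, L] of y₀″ + V y₀ = λ₀ f₁ y₀ + λ₀² f₂ y₀ with y₀(L) = 0. Then there exists no H²-solution y₁ on (-∞, L] satisfying y₁(L) = 0 and y₁″ + V y₁ − λ₀ f₁ y₁ − λ₀² f₂ y₁ = (f₁ + 2λ₀ f₂) y₀; that is, every nonnegative eigenvalue of the truncated Dirichlet problem is semisimple. -/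
open MeasureTheory Matrix Set
open scoped ComplexOrder

noncomputable section

open Filter
open scoped Topology

local notation "⟪" x ", " y "⟫" => @inner ℂ _ _ x y

lemma mact_symm {n : ℕ} {M : Matrix (Fin n) (Fin n) ℂ} (hM : M.IsHermitian)
    (u v : EuclideanSpace ℂ (Fin n)) : ⟪mact M u, v⟫ = ⟪u, mact M v⟫ :=
  (Matrix.isHermitian_iff_isSymmetric.mp hM) u v

lemma re_inner_mact_nonneg {n : ℕ} {M : Matrix (Fin n) (Fin n) ℂ} (hM : M.PosSemidef)
    (v : EuclideanSpace ℂ (Fin n)) : 0 ≤ (⟪v, mact M v⟫).re :=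
  by convert hM.re_dotProduct_nonneg ((WithLp.equiv 2 _) v) using 2
     simp [mact, EuclideanSpace.inner_eq_star_dotProduct, dotProduct_comm]

lemma re_inner_mact_pos {n : ℕ} {M : Matrix (Fin n) (Fin n) ℂ} (hM : M.PosDef)
    {v : EuclideanSpace ℂ (Fin n)} (hv : v ≠ 0) : 0 < (⟪v, mact M v⟫).re :=
  by convert hM.re_dotProduct_pos (fun h => hv ((WithLp.equiv 2 _).injective h)) using 2
     simp [mact, EuclideanSpace.inner_eq_star_dotProduct, dotProduct_comm]

lemma continuous_toECLM {n : ℕ} :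
    Continuous fun M : Matrix (Fin n) (Fin n) ℂ => Matrix.toEuclideanCLM (𝕜 := ℂ) M :=
  LinearMap.continuous_of_finiteDimensional
    { toFun := fun M => Matrix.toEuclideanCLM (𝕜 := ℂ) M
      map_add' := fun a b => map_add _ a b
      map_smul' := fun c a => map_smul _ c a }

lemma continuousOn_mact {n : ℕ} {A : ℝ → Matrix (Fin n) (Fin n) ℂ}
    {y : ℝ → EuclideanSpace ℂ (Fin n)} {s : Set ℝ}
    (hA : Continuous A) (hy : ContinuousOn y s) :
    ContinuousOn (fun x => mact (A x) (y x)) s :=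
  ((continuous_toECLM.comp hA).continuousOn).clm_apply hy

lemma norm_mact_le {n : ℕ} (M : Matrix (Fin n) (Fin n) ℂ) (v : EuclideanSpace ℂ (Fin n)) :
    ‖mact M v‖ ≤ ‖Matrix.toEuclideanCLM (𝕜 := ℂ) M‖ * ‖v‖ :=
  (Matrix.toEuclideanCLM (𝕜 := ℂ) M).le_opNorm v

lemma mact_add_smul {n : ℕ} (M N : Matrix (Fin n) (Fin n) ℂ) (c : ℂ)
    (v : EuclideanSpace ℂ (Fin n)) :
    mact (M + c • N) v = mact M v + c • mact N v := by
  simp [mact, map_add, _root_.map_smul]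

/-- nonnegative eigenvalues of the truncated Dirichlet problem on `(-∞, L]`
are semisimple: there is no generalized eigenfunction `y₁` above an eigenfunction `y₀`. -/
theorem truncated_dirichlet_nonneg_eigenvalue_semisimple {n : ℕ} (hn : 1 ≤ n)
    (lam₀ : ℝ) (hlam₀ : 0 ≤ lam₀) (L : ℝ)
    (V f₁ f₂ : ℝ → Matrix (Fin n) (Fin n) ℂ)
    (hVcont : Continuous V)
    (hf₁cont : Continuous f₁)
    (hf₂cont : Continuous f₂)
    (hbdd : ∃ C : ℝ, ∀ x : ℝ,
      ‖Matrix.toEuclideanCLM (𝕜 := ℂ) (V x)‖ ≤ C ∧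
      ‖Matrix.toEuclideanCLM (𝕜 := ℂ) (f₁ x)‖ ≤ C ∧
      ‖Matrix.toEuclideanCLM (𝕜 := ℂ) (f₂ x)‖ ≤ C)
    (hVherm : ∀ x : ℝ, (V x).IsHermitian)
    (hf₁herm : ∀ x : ℝ, (f₁ x).IsHermitian)
    (hf₂herm : ∀ x : ℝ, (f₂ x).IsHermitian)
    (hf₁pos : ∀ x : ℝ, (f₁ x).PosDef)
    (hf₂pos : ∀ x : ℝ, (f₂ x).PosSemidef)
    (y₀ y₀' y₀'' : ℝ → EuclideanSpace ℂ (Fin n))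
    (hy₀ne : ∃ x ∈ Iic L, y₀ x ≠ 0)
    (hy₀1 : ∀ x ∈ Iic L, HasDerivWithinAt y₀ (y₀' x) (Iic L) x)
    (hy₀2 : ∀ x ∈ Iic L, HasDerivWithinAt y₀' (y₀'' x) (Iic L) x)
    (hy₀cont : ContinuousOn y₀'' (Iic L))
    (hy₀L2 : Integrable (fun x => ‖y₀ x‖ ^ 2) (volume.restrict (Iic L)))
    (hy₀'L2 : Integrable (fun x => ‖y₀' x‖ ^ 2) (volume.restrict (Iic L)))
    (hy₀''L2 : Integrable (fun x => ‖y₀'' x‖ ^ 2) (volume.restrict (Iic L)))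
    (hy₀eqn : ∀ x ∈ Iic L, y₀'' x + mact (V x) (y₀ x)
        = (lam₀ : ℂ) • mact (f₁ x) (y₀ x) + (lam₀ : ℂ) ^ 2 • mact (f₂ x) (y₀ x))
    (hy₀bc : y₀ L = 0) :
    ¬ ∃ y₁ y₁' y₁'' : ℝ → EuclideanSpace ℂ (Fin n),
      (∀ x ∈ Iic L, HasDerivWithinAt y₁ (y₁' x) (Iic L) x) ∧
      (∀ x ∈ Iic L, HasDerivWithinAt y₁' (y₁'' x) (Iic L) x) ∧
      ContinuousOn y₁'' (Iic L) ∧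
      Integrable (fun x => ‖y₁ x‖ ^ 2) (volume.restrict (Iic L)) ∧
      Integrable (fun x => ‖y₁' x‖ ^ 2) (volume.restrict (Iic L)) ∧
      Integrable (fun x => ‖y₁'' x‖ ^ 2) (volume.restrict (Iic L)) ∧
      y₁ L = 0 ∧
      (∀ x ∈ Iic L,
        y₁'' x + mact (V x) (y₁ x) - (lam₀ : ℂ) • mact (f₁ x) (y₁ x)
            - (lam₀ : ℂ) ^ 2 • mact (f₂ x) (y₁ x)
          = mact (f₁ x + (2 * lam₀ : ℂ) • f₂ x) (y₀ x)) := by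
  rintro ⟨y₁, y₁', y₁'', hy₁1, hy₁2, hy₁cont, hy₁L2, hy₁'L2, hy₁''L2, hy₁bc, hy₁eqn⟩
  obtain ⟨C, hC⟩ := hbdd
  have hmIic : MeasurableSet (Iic L) := measurableSet_Iic
  have hy₀c : ContinuousOn y₀ (Iic L) := fun x hx => (hy₀1 x hx).continuousWithinAt
  have hy₀'c : ContinuousOn y₀' (Iic L) := fun x hx => (hy₀2 x hx).continuousWithinAt
  have hy₁c : ContinuousOn y₁ (Iic L) := fun x hx => (hy₁1 x hx).continuousWithinAt
  have hy₁'c : ContinuousOn y₁' (Iic L) := fun x hx => (hy₁2 x hx).continuousWithinAt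
  set g : ℝ → ℂ := fun x => ⟪y₀ x, mact (f₁ x + (2 * lam₀ : ℂ) • f₂ x) (y₀ x)⟫ with hgdef
  set F : ℝ → ℂ := fun x => ⟪y₀ x, y₁' x⟫ - ⟪y₀' x, y₁ x⟫ with hFdef
  -- derivative of F equals g on Iic L
  have hFderiv : ∀ x ∈ Iic L, HasDerivWithinAt F (g x) (Iic L) x := by
    intro x hx
    have h1 := (hy₀1 x hx).inner ℂ (hy₁2 x hx)
    have h2 := (hy₀2 x hx).inner ℂ (hy₁1 x hx)
    have h3 := h1.sub h2
    have hkey : ⟪y₀ x, y₁'' x⟫ + ⟪y₀' x, y₁' x⟫ - (⟪y₀' x, y₁' x⟫ + ⟪y₀'' x, y₁ x⟫) = g x := by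
      have e₁ : y₁'' x = mact (f₁ x + (2 * lam₀ : ℂ) • f₂ x) (y₀ x)
          + ((lam₀ : ℂ) • mact (f₁ x) (y₁ x) + (lam₀ : ℂ) ^ 2 • mact (f₂ x) (y₁ x))
          - mact (V x) (y₁ x) := by
        have h := hy₁eqn x hx
        rw [sub_sub, sub_eq_iff_eq_add] at h
        exact eq_sub_of_add_eq h
      have e₀ : y₀'' x = (lam₀ : ℂ) • mact (f₁ x) (y₀ x) + (lam₀ : ℂ) ^ 2 • mact (f₂ x) (y₀ x)
          - mact (V x) (y₀ x) := eq_sub_of_add_eq (hy₀eqn x hx)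
      rw [e₁, e₀]
      simp only [inner_add_right, inner_sub_right, inner_smul_right, inner_sub_left,
        inner_add_left, inner_smul_left, map_pow, Complex.conj_ofReal]
      rw [mact_symm (hVherm x), mact_symm (hf₁herm x), mact_symm (hf₂herm x)]
      ring
    rw [← hkey]
    exact h3
  -- integrability of inner products of L² functions
  have hinnerInt : ∀ u v : ℝ → EuclideanSpace ℂ (Fin n), ContinuousOn u (Iic L) →
      ContinuousOn v (Iic L) →
      Integrable (fun x => ‖u x‖ ^ 2) (volume.restrict (Iic L)) →
      Integrable (fun x => ‖v x‖ ^ 2) (volume.restrict (Iic L)) →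
      Integrable (fun x => ⟪u x, v x⟫) (volume.restrict (Iic L)) := by
    intro u v hu hv hu2 hv2
    refine (hu2.add hv2).mono' ((hu.inner hv).aestronglyMeasurable hmIic) ?_
    refine Eventually.of_forall fun x => ?_
    show ‖(⟪u x, v x⟫ : ℂ)‖ ≤ ‖u x‖ ^ 2 + ‖v x‖ ^ 2
    have h1 := norm_inner_le_norm (𝕜 := ℂ) (u x) (v x)
    nlinarith [norm_nonneg (u x), norm_nonneg (v x), sq_nonneg (‖u x‖ - ‖v x‖)]
  have hFint : Integrable F (volume.restrict (Iic L)) :=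
    (hinnerInt y₀ y₁' hy₀c hy₁'c hy₀L2 hy₁'L2).sub (hinnerInt y₀' y₁ hy₀'c hy₁c hy₀'L2 hy₁L2)
  -- integrability of g
  have hgc : ContinuousOn g (Iic L) :=
    hy₀c.inner (continuousOn_mact (hf₁cont.add (by fun_prop)) hy₀c)
  have hgint : Integrable g (volume.restrict (Iic L)) := by
    refine ((hy₀L2.const_mul (C + 2 * lam₀ * C)).mono'
      (hgc.aestronglyMeasurable hmIic) (Eventually.of_forall fun x => ?_))
    have h1 : ‖mact (f₁ x + (2 * lam₀ : ℂ) • f₂ x) (y₀ x)‖ ≤ (C + 2 * lam₀ * C) * ‖y₀ x‖ := by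
      rw [mact_add_smul]
      refine (norm_add_le _ _).trans ?_
      have h2 := norm_mact_le (f₁ x) (y₀ x)
      have h3 := norm_mact_le (f₂ x) (y₀ x)
      have h4 : ‖(2 * (lam₀ : ℂ)) • mact (f₂ x) (y₀ x)‖ = 2 * lam₀ * ‖mact (f₂ x) (y₀ x)‖ := by
        rw [norm_smul]
        congr 1
        simp [abs_of_nonneg hlam₀]
      rw [h4]
      have hC1 := (hC x).2.1
      have hC2 := (hC x).2.2
      have hn0 := norm_nonneg (y₀ x)
      have k1 : ‖mact (f₁ x) (y₀ x)‖ ≤ C * ‖y₀ x‖ :=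
        h2.trans (mul_le_mul_of_nonneg_right hC1 hn0)
      have k2 : ‖mact (f₂ x) (y₀ x)‖ ≤ C * ‖y₀ x‖ :=
        h3.trans (mul_le_mul_of_nonneg_right hC2 hn0)
      have k3 : 2 * lam₀ * ‖mact (f₂ x) (y₀ x)‖ ≤ 2 * lam₀ * (C * ‖y₀ x‖) :=
        mul_le_mul_of_nonneg_left k2 (by positivity)
      linarith
    have h5 := norm_inner_le_norm (𝕜 := ℂ) (y₀ x) (mact (f₁ x + (2 * lam₀ : ℂ) • f₂ x) (y₀ x))
    calc ‖g x‖ ≤ ‖y₀ x‖ * ‖mact (f₁ x + (2 * lam₀ : ℂ) • f₂ x) (y₀ x)‖ := h5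
      _ ≤ ‖y₀ x‖ * ((C + 2 * lam₀ * C) * ‖y₀ x‖) := by
          exact mul_le_mul_of_nonneg_left h1 (norm_nonneg _)
      _ = (C + 2 * lam₀ * C) * ‖y₀ x‖ ^ 2 := by ring
  -- FTC : F a = -(∫ x in a..L, g x)
  have hFL : F L = 0 := by simp [hFdef, hy₀bc, hy₁bc]
  have hFa : ∀ a, a ≤ L → F a = -(∫ x in a..L, g x) := by
    intro a ha
    have hftc : ∫ x in a..L, g x = F L - F a := by
      apply intervalIntegral.integral_eq_sub_of_hasDeriv_right_of_le ha
      · have hFcont : ContinuousOn F (Iic L) := fun x hx => (hFderiv x hx).continuousWithinAt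
        exact hFcont.mono Icc_subset_Iic_self
      · intro x hx
        exact (((hFderiv x (le_of_lt hx.2)).hasDerivAt
          (Iic_mem_nhds hx.2)).hasDerivWithinAt)
      · exact ((MeasureTheory.IntegrableOn.mono_set hgint) (by rw [uIcc_of_le ha]; exact Icc_subset_Iic_self)).intervalIntegrable
    rw [hFL] at hftc
    rw [hftc]
    ring
  -- limit of F at -∞
  have htend : Tendsto F atBot (𝓝 (-(∫ x in Iic L, g x))) := by
    have h1 : Tendsto (fun a : ℝ => ∫ x in a..L, g x) atBot (𝓝 (∫ x in Iic L, g x)) :=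
      intervalIntegral_tendsto_integral_Iic L hgint tendsto_id
    refine h1.neg.congr' ?_
    filter_upwards [eventually_le_atBot L] with a ha
    exact (hFa a ha).symm
  -- an integrable function with a limit at -∞ has limit 0
  have hI0 : (∫ x in Iic L, g x) = 0 := by
    by_contra hne
    set c := -(∫ x in Iic L, g x) with hc
    have hcne : c ≠ 0 := by simpa [hc] using hne
    have hcpos : 0 < ‖c‖ := norm_pos_iff.mpr hcne
    have hev : ∀ᶠ a in atBot, ‖c‖ / 2 < ‖F a‖ :=
      (htend.norm).eventually (eventually_gt_nhds (by linarith))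
    obtain ⟨b, hb⟩ := eventually_atBot.mp hev
    set b' := min b L with hb'
    have hconst : Integrable (fun _ : ℝ => ‖c‖ / 2) (volume.restrict (Iic b')) := by
      refine Integrable.mono (MeasureTheory.IntegrableOn.mono_set hFint (Iic_subset_Iic.mpr (min_le_right b L)))
        aestronglyMeasurable_const ?_
      rw [ae_restrict_iff' measurableSet_Iic]
      refine Eventually.of_forall fun x hx => ?_
      have := hb x (le_trans hx (min_le_left b L))
      rw [Real.norm_eq_abs, abs_of_nonneg (by positivity)]
      linarith
    have hfin := (integrable_const_iff.mp hconst)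
    rcases hfin with h | h
    · exact absurd h (by positivity)
    · rw [isFiniteMeasure_restrict, Real.volume_Iic] at h
      exact absurd h (by simp)
  -- pass to real parts
  have hgre_int : Integrable (fun x => (g x).re) (volume.restrict (Iic L)) := hgint.re
  have hre0 : (∫ x in Iic L, (g x).re) = 0 := by
    have h := integral_re hgint
    rw [hI0] at h
    simpa using h
  -- pointwise nonnegativity of re g
  have hgre_nonneg : ∀ x : ℝ, 0 ≤ (g x).re := by
    intro x
    have h1 := re_inner_mact_nonneg (hf₁pos x).posSemidef (y₀ x)
    have h2 := re_inner_mact_nonneg (hf₂pos x) (y₀ x)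
    have : g x = ⟪y₀ x, mact (f₁ x) (y₀ x)⟫ + (2 * (lam₀ : ℂ)) * ⟪y₀ x, mact (f₂ x) (y₀ x)⟫ := by
      rw [hgdef]
      simp only []
      rw [mact_add_smul, inner_add_right, inner_smul_right]
    rw [this]
    simp only [Complex.add_re, Complex.mul_re, Complex.mul_im, Complex.ofReal_re,
      Complex.ofReal_im, Complex.re_ofNat, Complex.im_ofNat]
    nlinarith
  -- strict positivity at x₀
  obtain ⟨x₀, hx₀L, hx₀ne⟩ := hy₀ne
  have hx₀lt : x₀ < L := lt_of_le_of_ne hx₀L (fun h => hx₀ne (by rw [h]; exact hy₀bc))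
  have hpos₀ : 0 < (g x₀).re := by
    have h1 := re_inner_mact_pos (hf₁pos x₀) hx₀ne
    have h2 := re_inner_mact_nonneg (hf₂pos x₀) (y₀ x₀)
    have : g x₀ = ⟪y₀ x₀, mact (f₁ x₀) (y₀ x₀)⟫
        + (2 * (lam₀ : ℂ)) * ⟪y₀ x₀, mact (f₂ x₀) (y₀ x₀)⟫ := by
      rw [hgdef]
      simp only []
      rw [mact_add_smul, inner_add_right, inner_smul_right]
    rw [this]
    simp only [Complex.add_re, Complex.mul_re, Complex.mul_im, Complex.ofReal_re,
      Complex.ofReal_im, Complex.re_ofNat, Complex.im_ofNat]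
    nlinarith
  -- continuity of re g at x₀ and local lower bound
  have hca : ContinuousAt (fun x => (g x).re) x₀ :=
    (Complex.continuous_re.comp_continuousOn hgc x₀ hx₀L).continuousAt (Iic_mem_nhds hx₀lt)
  have hev2 : ∀ᶠ x in 𝓝 x₀, (g x₀).re / 2 < (g x).re :=
    hca.eventually (eventually_gt_nhds (by linarith))
  obtain ⟨ε, hε, hball⟩ := Metric.eventually_nhds_iff.mp hev2
  set a := x₀ - ε / 2 with hadef
  have hsub : Icc a x₀ ⊆ Iic L := fun x hx => le_trans hx.2 hx₀L
  have hlow : ∀ x ∈ Icc a x₀, (g x₀).re / 2 ≤ (g x).re := by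
    intro x hx
    refine le_of_lt (hball ?_)
    rw [Real.dist_eq, abs_lt]
    constructor
    · have := hx.1; simp only [hadef] at this; linarith
    · have := hx.2; linarith
  have hvol : volume (Icc a x₀) = ENNReal.ofReal (ε / 2) := by
    rw [Real.volume_Icc]; congr 1; rw [hadef]; ring
  have h1 : (g x₀).re / 2 * (volume (Icc a x₀)).toReal ≤ ∫ x in Icc a x₀, (g x).re := by
    refine (le_of_eq (by rw [measureReal_def, smul_eq_mul, mul_comm])).trans (setIntegral_ge_of_const_le measurableSet_Icc ?_ hlow (MeasureTheory.IntegrableOn.mono_set hgre_int hsub))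
    rw [hvol]; exact ENNReal.ofReal_ne_top
  have h2 : (∫ x in Icc a x₀, (g x).re) ≤ ∫ x in Iic L, (g x).re := by
    refine setIntegral_mono_set hgre_int ?_ (HasSubset.Subset.eventuallyLE hsub)
    exact Eventually.of_forall fun x => hgre_nonneg x
  rw [hre0] at h2
  rw [hvol, ENNReal.toReal_ofReal (by positivity)] at h1
  nlinarith
end
end

section
/- Let V, f₁, f₂ : ℝ → M_n(ℂ) be continuous, bounded, Hermitian-matrix-valued functions with f₁(x) positive definite and f₂(x) positive semidefinite for every x ∈ ℝ. If λ ∈ ℂ with Re λ ≥ 0 is such that there exists a nonzero H²-solution y on ℝ of y″(x) + V(x)y(x) = λ f₁(x)y(x) + λ² f₂(x)y(x), then Im λ = 0; that is, every eigenvalue of the whole-line problem with nonnegative real part is real. -/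
open MeasureTheory Matrix Set
open scoped ComplexOrder

noncomputable section

lemma mact_inner_eq {n : ℕ} (M : Matrix (Fin n) (Fin n) ℂ) (v : EuclideanSpace ℂ (Fin n)) :
    (inner ℂ v (mact M v) : ℂ)
      = dotProduct (star ((WithLp.equiv 2 _) v)) (M *ᵥ ((WithLp.equiv 2 _) v)) := by
  rw [EuclideanSpace.inner_eq_star_dotProduct, dotProduct_comm]
  rfl

lemma herm_inner_real {n : ℕ} {M : Matrix (Fin n) (Fin n) ℂ} (hM : M.IsHermitian)
    (v : EuclideanSpace ℂ (Fin n)) :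
    (inner ℂ (mact M v) v : ℂ) = (((inner ℂ v (mact M v) : ℂ)).re : ℂ) := by
  have hsym := (Matrix.isHermitian_iff_isSymmetric.mp hM)
  have h1 : (inner ℂ (mact M v) v : ℂ) = (inner ℂ v (mact M v) : ℂ) := by
    have := hsym v v
    simpa [mact, ← Matrix.coe_toEuclideanCLM_eq_toEuclideanLin] using this
  have h2 : (starRingEnd ℂ) (inner ℂ v (mact M v) : ℂ) = (inner ℂ v (mact M v) : ℂ) := by
    rw [inner_conj_symm, h1]
  rw [h1, Complex.conj_eq_iff_re.mp h2]

lemma posdef_re {n : ℕ} {M : Matrix (Fin n) (Fin n) ℂ} (hM : M.PosDef)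
    {v : EuclideanSpace ℂ (Fin n)} (hv : v ≠ 0) :
    0 < (inner ℂ v (mact M v) : ℂ).re := by
  rw [mact_inner_eq]
  have hv' : (WithLp.equiv 2 (Fin n → ℂ)) v ≠ 0 := by
    simpa using hv
  simpa using hM.re_dotProduct_pos hv'

lemma possemidef_re {n : ℕ} {M : Matrix (Fin n) (Fin n) ℂ} (hM : M.PosSemidef)
    (v : EuclideanSpace ℂ (Fin n)) :
    0 ≤ (inner ℂ v (mact M v) : ℂ).re := by
  rw [mact_inner_eq]
  simpa using hM.re_dotProduct_nonneg ((WithLp.equiv 2 (Fin n → ℂ)) v)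

set_option linter.unnecessarySeqFocus false in
lemma no_integrable_antitone_aux (u w : ℝ → ℝ)
    (hw0 : ∀ x, 0 ≤ w x) (hwcont : Continuous w)
    (hu : ∀ x, HasDerivAt u (w x) x)
    (hui : Integrable u) {x₀ : ℝ} (hx₀ : 0 < w x₀) : False := by
  have hdiff : Differentiable ℝ u := fun x => (hu x).differentiableAt
  have hderiv : ∀ x, deriv u x = w x := fun x => (hu x).deriv
  have hmono : Monotone u := monotone_of_deriv_nonneg hdiff fun x => (hderiv x) ▸ hw0 x
  obtain ⟨δ, hδ, hball⟩ := Metric.isOpen_iff.mp (isOpen_lt continuous_const hwcont) x₀ hx₀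
  set a := x₀ - δ/2
  set b := x₀ + δ/2
  have hab : a < b := by simp only [a, b]; linarith
  have hsm : StrictMonoOn u (Icc a b) := by
    apply strictMonoOn_of_deriv_pos (convex_Icc a b) hdiff.continuous.continuousOn
    intro x hx
    rw [interior_Icc] at hx
    rw [hderiv]
    apply hball
    rw [Metric.mem_ball, Real.dist_eq, abs_lt]
    constructor <;> [skip; skip] <;>
      (obtain ⟨h1, h2⟩ := hx; simp only [a, b] at h1 h2; linarith)
  have hlt : u a < u b := hsm (by constructor <;> simp [a, b] <;> linarith)
    (by constructor <;> simp [a, b] <;> linarith) hab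
  have key : ∀ (s : Set ℝ) (_ : MeasurableSet s) (_ : volume s = ⊤) (c : ℝ) (hc : 0 < c)
      (hcb : ∀ x ∈ s, c ≤ |u x|), False := by
    intro s hms hvs c hc hcb
    have hint : IntegrableOn (fun _ => c) s := by
      apply Integrable.mono hui.integrableOn aestronglyMeasurable_const
      filter_upwards [self_mem_ae_restrict hms] with x hx
      rw [Real.norm_eq_abs, Real.norm_eq_abs, abs_of_pos hc]
      exact hcb x hx
    rw [integrableOn_const_iff] at hint
    rcases hint with h | h
    · exact hc.ne' (enorm_eq_zero.mp h)
    · rw [hvs] at h; exact lt_irrefl _ h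
  rcases lt_or_ge 0 (u b) with hb | hb
  · refine key (Ici b) measurableSet_Ici (by simp [Real.volume_Ici]) (u b) hb ?_
    intro x hx
    exact le_trans (hmono hx) (le_abs_self _)
  · have ha : u a < 0 := lt_of_lt_of_le hlt hb
    refine key (Iic a) measurableSet_Iic (by simp [Real.volume_Iic]) (-(u a)) (by linarith) ?_
    intro x hx
    rw [abs_of_nonpos (le_trans (hmono hx) ha.le)]
    exact neg_le_neg (hmono hx)

/-- every eigenvalue of the whole-line quadratic pencil with nonnegative
real part is real. -/
theorem wholeline_unstable_eigenvalues_real {n : ℕ} (hn : 1 ≤ n)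
    (V f₁ f₂ : ℝ → Matrix (Fin n) (Fin n) ℂ)
    (hVcont : Continuous V)
    (hf₁cont : Continuous f₁)
    (hf₂cont : Continuous f₂)
    (hbdd : ∃ C : ℝ, ∀ x : ℝ,
      ‖Matrix.toEuclideanCLM (𝕜 := ℂ) (V x)‖ ≤ C ∧
      ‖Matrix.toEuclideanCLM (𝕜 := ℂ) (f₁ x)‖ ≤ C ∧
      ‖Matrix.toEuclideanCLM (𝕜 := ℂ) (f₂ x)‖ ≤ C)
    (hVherm : ∀ x : ℝ, (V x).IsHermitian)
    (hf₁herm : ∀ x : ℝ, (f₁ x).IsHermitian)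
    (hf₂herm : ∀ x : ℝ, (f₂ x).IsHermitian)
    (hf₁pos : ∀ x : ℝ, (f₁ x).PosDef)
    (hf₂pos : ∀ x : ℝ, (f₂ x).PosSemidef)
    (lam : ℂ) (hlam : 0 ≤ lam.re)
    (y y' y'' : ℝ → EuclideanSpace ℂ (Fin n))
    (hyne : ∃ x : ℝ, y x ≠ 0)
    (hy1 : ∀ x : ℝ, HasDerivAt y (y' x) x)
    (hy2 : ∀ x : ℝ, HasDerivAt y' (y'' x) x)
    (hycont : Continuous y'')
    (hyL2 : Integrable (fun x => ‖y x‖ ^ 2))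
    (hy'L2 : Integrable (fun x => ‖y' x‖ ^ 2))
    (hy''L2 : Integrable (fun x => ‖y'' x‖ ^ 2))
    (heqn : ∀ x : ℝ, y'' x + mact (V x) (y x)
        = lam • mact (f₁ x) (y x) + lam ^ 2 • mact (f₂ x) (y x)) :
    lam.im = 0 := by
  by_contra h
  obtain ⟨x₀, hx₀⟩ := hyne
  set r₁ : ℝ → ℝ := fun x => (inner ℂ (y x) (mact (f₁ x) (y x)) : ℂ).re with hr₁
  set r₂ : ℝ → ℝ := fun x => (inner ℂ (y x) (mact (f₂ x) (y x)) : ℂ).re with hr₂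
  set w : ℝ → ℝ := fun x => r₁ x + 2 * lam.re * r₂ x with hw
  set u : ℝ → ℝ := fun x => (inner ℂ (y' x) (y x) : ℂ).im with hu_def
  -- derivative of u
  have hu : ∀ x, HasDerivAt u (-(lam.im) * w x) x := by
    intro x
    have h1 : HasDerivAt (fun t => (inner ℂ (y' t) (y t) : ℂ))
        ((inner ℂ (y' x) (y' x) : ℂ) + (inner ℂ (y'' x) (y x) : ℂ)) x :=
      HasDerivAt.inner ℂ (hy2 x) (hy1 x)
    have h2 := Complex.imCLM.hasFDerivAt.comp_hasDerivAt x h1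
    have hself : (inner ℂ (y' x) (y' x) : ℂ).im = 0 := by
      have := inner_conj_symm (𝕜 := ℂ) (y' x) (y' x)
      exact (Complex.conj_eq_iff_im.mp this)
    have hyx : y'' x = lam • mact (f₁ x) (y x) + lam ^ 2 • mact (f₂ x) (y x)
        - mact (V x) (y x) := eq_sub_of_add_eq (heqn x)
    have him : (inner ℂ (y'' x) (y x) : ℂ).im = -(lam.im) * w x := by
      rw [hyx, inner_sub_left, inner_add_left, inner_smul_left, inner_smul_left,
        herm_inner_real (hf₁herm x), herm_inner_real (hf₂herm x),
        herm_inner_real (hVherm x)]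
      simp only [Complex.sub_im, Complex.add_im, Complex.mul_im, Complex.conj_re,
        Complex.conj_im, Complex.ofReal_re, Complex.ofReal_im, map_pow, pow_two,
        Complex.mul_re, Complex.mul_im, hw, hr₁, hr₂]
      ring
    refine h2.congr_deriv ?_
    simp only [Complex.imCLM_apply, Complex.add_im, hself, him, zero_add]
  have hlamne : (-(lam.im)) ≠ 0 := by simpa using h
  have hu' : ∀ x, HasDerivAt (fun t => u t / (-(lam.im))) (w x) x := by
    intro x
    have h0 := (hu x).div_const (-(lam.im))
    have heq : -lam.im * w x / -lam.im = w x := by field_simp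
    rwa [heq] at h0
  -- continuity facts
  have hyd : Differentiable ℝ y := fun x => (hy1 x).differentiableAt
  have hy'd : Differentiable ℝ y' := fun x => (hy2 x).differentiableAt
  have hyc : Continuous y := hyd.continuous
  have hy'c : Continuous y' := hy'd.continuous
  have hCLM : Continuous (fun M : Matrix (Fin n) (Fin n) ℂ =>
      (Matrix.toEuclideanCLM (𝕜 := ℂ) M :
        EuclideanSpace ℂ (Fin n) →L[ℂ] EuclideanSpace ℂ (Fin n))) := by
    let L : Matrix (Fin n) (Fin n) ℂ →ₗ[ℂ]
        (EuclideanSpace ℂ (Fin n) →L[ℂ] EuclideanSpace ℂ (Fin n)) :=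
      { toFun := fun M => Matrix.toEuclideanCLM (𝕜 := ℂ) M
        map_add' := fun a b => map_add _ a b
        map_smul' := fun c a => map_smul _ c a }
    exact L.continuous_of_finiteDimensional
  have hmactc : ∀ (f : ℝ → Matrix (Fin n) (Fin n) ℂ), Continuous f →
      Continuous (fun x => mact (f x) (y x)) := fun f hf =>
    (hCLM.comp hf).clm_apply hyc
  have hr₁c : Continuous r₁ :=
    Complex.continuous_re.comp (hyc.inner (hmactc f₁ hf₁cont))
  have hr₂c : Continuous r₂ :=
    Complex.continuous_re.comp (hyc.inner (hmactc f₂ hf₂cont))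
  have hwcont : Continuous w := hr₁c.add (continuous_const.mul hr₂c)
  -- nonnegativity
  have hw0 : ∀ x, 0 ≤ w x := by
    intro x
    have h1 : 0 ≤ r₁ x := possemidef_re (hf₁pos x).posSemidef (y x)
    have h2 : 0 ≤ r₂ x := possemidef_re (hf₂pos x) (y x)
    have : 0 ≤ 2 * lam.re * r₂ x := by positivity
    simp only [hw]; linarith
  have hx₀w : 0 < w x₀ := by
    have h1 : 0 < r₁ x₀ := posdef_re (hf₁pos x₀) hx₀
    have h2 : 0 ≤ r₂ x₀ := possemidef_re (hf₂pos x₀) (y x₀)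
    have : 0 ≤ 2 * lam.re * r₂ x₀ := by positivity
    simp only [hw]; linarith
  -- integrability of u
  have hucont : Continuous u := Complex.continuous_im.comp (hy'c.inner hyc)
  have huint : Integrable u := by
    apply Integrable.mono (hyL2.add hy'L2) hucont.aestronglyMeasurable
    filter_upwards with x
    have h1 : |u x| ≤ ‖(inner ℂ (y' x) (y x) : ℂ)‖ := by
      exact Complex.abs_im_le_norm _
    have h2 : ‖(inner ℂ (y' x) (y x) : ℂ)‖ ≤ ‖y' x‖ * ‖y x‖ := norm_inner_le_norm _ _
    have h3 : ‖y' x‖ * ‖y x‖ ≤ ‖y x‖ ^ 2 + ‖y' x‖ ^ 2 := by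
      nlinarith [sq_nonneg (‖y x‖ - ‖y' x‖), norm_nonneg (y x), norm_nonneg (y' x),
        mul_nonneg (norm_nonneg (y' x)) (norm_nonneg (y x))]
    have h4 : 0 ≤ ‖y x‖ ^ 2 + ‖y' x‖ ^ 2 := by positivity
    simp only [Pi.add_apply, Real.norm_eq_abs]
    rw [abs_of_nonneg h4]
    linarith
  exact no_integrable_antitone_aux _ w hw0 hwcont hu' (huint.div_const _) hx₀w
end
end

section
/- Let A, B, C, D ∈ M_n(ℝ) be symmetric positive definite matrices such that A commutes with C and B commutes with D, and suppose B − A is positive definite and D − C is positive semidefinite. Then for every p with 0 < p ≤ 1, the matrix B^p D^{1−p} − A^p C^{1−p} is positive definite. (Since A and C commute, A^p and C^{1−p} commute and A^p C^{1−p} is symmetric positive definite, and similarly for B, D.) -/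
open Matrix

noncomputable section

/-- The real power `A^p` of a symmetric matrix, defined by the spectral functional
calculus: diagonalize and apply `t ↦ t ^ p` to the eigenvalues. -/
def herPow {n : ℕ} (A : Matrix (Fin n) (Fin n) ℝ) (hA : A.IsHermitian) (p : ℝ) :
    Matrix (Fin n) (Fin n) ℝ :=
  hA.eigenvectorUnitary.1 *
    Matrix.diagonal (fun i => hA.eigenvalues i ^ p) *
    (star hA.eigenvectorUnitary : Matrix (Fin n) (Fin n) ℝ)

namespace InterpAux

open MeasureTheory Set Module Module.End LinearMap

variable {n : ℕ}

local notation "Mat" => Matrix (Fin n) (Fin n) ℝ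

/-! ### Quadratic forms -/

def q (M : Mat) (v : Fin n → ℝ) : ℝ := v ⬝ᵥ M *ᵥ v

lemma posSemidef_q {M : Mat} (hM : M.PosSemidef) (v : Fin n → ℝ) : 0 ≤ q M v := by
  simpa [q, star_trivial] using hM.dotProduct_mulVec_nonneg v

lemma posDef_q {M : Mat} (hM : M.PosDef) {v : Fin n → ℝ} (hv : v ≠ 0) : 0 < q M v := by
  simpa [q, star_trivial] using hM.dotProduct_mulVec_pos hv

lemma herm_transpose {M : Mat} (hM : M.IsHermitian) : M.transpose = M := by
  simpa using congrArg (fun X => X) hM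

lemma dot_swap {M : Mat} (hM : M.IsHermitian) (x y : Fin n → ℝ) :
    x ⬝ᵥ M *ᵥ y = y ⬝ᵥ M *ᵥ x := by
  rw [Matrix.dotProduct_mulVec, ← herm_transpose hM, Matrix.vecMul_transpose,
    dotProduct_comm, herm_transpose hM]

lemma isUnit_det_of_posDef {M : Mat} (h : M.PosDef) : IsUnit M.det :=
  isUnit_iff_ne_zero.mpr h.det_pos.ne'

lemma q_sub (X Y : Mat) (v : Fin n → ℝ) : q (X - Y) v = q X v - q Y v := by
  simp only [q, Matrix.sub_mulVec, dotProduct_sub]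

lemma q_add (X Y : Mat) (v : Fin n → ℝ) : q (X + Y) v = q X v + q Y v := by
  simp only [q, Matrix.add_mulVec, dotProduct_add]

lemma q_smul (c : ℝ) (X : Mat) (v : Fin n → ℝ) : q (c • X) v = c * q X v := by
  simp only [q, Matrix.smul_mulVec, dotProduct_smul, smul_eq_mul]

/-! ### Antitonicity of the inverse -/

lemma q_inv_lt {M₁ M₂ : Mat} (h1 : M₁.PosDef) (h2 : M₂.PosDef)
    (h12 : (M₁ - M₂).PosDef) {v : Fin n → ℝ} (hv : v ≠ 0) :
    q M₁⁻¹ v < q M₂⁻¹ v := by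
  set u₁ := M₁⁻¹ *ᵥ v with hu₁def
  set u₂ := M₂⁻¹ *ᵥ v with hu₂def
  have hM₁u₁ : M₁ *ᵥ u₁ = v := by
    rw [hu₁def, Matrix.mulVec_mulVec, Matrix.mul_nonsing_inv _ (isUnit_det_of_posDef h1),
      Matrix.one_mulVec]
  have hM₂u₂ : M₂ *ᵥ u₂ = v := by
    rw [hu₂def, Matrix.mulVec_mulVec, Matrix.mul_nonsing_inv _ (isUnit_det_of_posDef h2),
      Matrix.one_mulVec]
  have hu₁ : u₁ ≠ 0 := by
    intro h; apply hv; rw [← hM₁u₁, h, Matrix.mulVec_zero]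
  have key : 0 ≤ q M₂ (u₁ - u₂) := posSemidef_q h2.posSemidef _
  have e1 : u₁ ⬝ᵥ M₂ *ᵥ u₂ = u₁ ⬝ᵥ v := by rw [hM₂u₂]
  have e2 : u₂ ⬝ᵥ M₂ *ᵥ u₁ = u₁ ⬝ᵥ v := by rw [dot_swap h2.1, e1]
  have e3 : u₂ ⬝ᵥ M₂ *ᵥ u₂ = u₂ ⬝ᵥ v := by rw [hM₂u₂]
  have expand : q M₂ (u₁ - u₂) = q M₂ u₁ - 2 * (u₁ ⬝ᵥ v) + u₂ ⬝ᵥ v := by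
    simp only [q, Matrix.mulVec_sub, sub_dotProduct, dotProduct_sub, e1, e2, e3]
    ring
  have e4 : q M₁ u₁ = u₁ ⬝ᵥ v := by rw [q, hM₁u₁]
  have e5 : q M₂ u₁ = q M₁ u₁ - q (M₁ - M₂) u₁ := by
    simp only [q, Matrix.sub_mulVec, dotProduct_sub]; ring
  have e6 : 0 < q (M₁ - M₂) u₁ := posDef_q h12 hu₁
  have g1 : q M₁⁻¹ v = u₁ ⬝ᵥ v := by rw [q, ← hu₁def, dotProduct_comm]
  have g2 : q M₂⁻¹ v = u₂ ⬝ᵥ v := by rw [q, ← hu₂def, dotProduct_comm]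
  linarith

lemma q_inv_le {M₁ M₂ : Mat} (h1 : M₁.PosDef) (h2 : M₂.PosDef)
    (h12 : (M₁ - M₂).PosSemidef) (v : Fin n → ℝ) :
    q M₁⁻¹ v ≤ q M₂⁻¹ v := by
  set u₁ := M₁⁻¹ *ᵥ v with hu₁def
  set u₂ := M₂⁻¹ *ᵥ v with hu₂def
  have hM₁u₁ : M₁ *ᵥ u₁ = v := by
    rw [hu₁def, Matrix.mulVec_mulVec, Matrix.mul_nonsing_inv _ (isUnit_det_of_posDef h1),
      Matrix.one_mulVec]
  have hM₂u₂ : M₂ *ᵥ u₂ = v := by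
    rw [hu₂def, Matrix.mulVec_mulVec, Matrix.mul_nonsing_inv _ (isUnit_det_of_posDef h2),
      Matrix.one_mulVec]
  have key : 0 ≤ q M₂ (u₁ - u₂) := posSemidef_q h2.posSemidef _
  have e1 : u₁ ⬝ᵥ M₂ *ᵥ u₂ = u₁ ⬝ᵥ v := by rw [hM₂u₂]
  have e2 : u₂ ⬝ᵥ M₂ *ᵥ u₁ = u₁ ⬝ᵥ v := by rw [dot_swap h2.1, e1]
  have e3 : u₂ ⬝ᵥ M₂ *ᵥ u₂ = u₂ ⬝ᵥ v := by rw [hM₂u₂]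
  have expand : q M₂ (u₁ - u₂) = q M₂ u₁ - 2 * (u₁ ⬝ᵥ v) + u₂ ⬝ᵥ v := by
    simp only [q, Matrix.mulVec_sub, sub_dotProduct, dotProduct_sub, e1, e2, e3]
    ring
  have e4 : q M₁ u₁ = u₁ ⬝ᵥ v := by rw [q, hM₁u₁]
  have e5 : q M₂ u₁ = q M₁ u₁ - q (M₁ - M₂) u₁ := by
    simp only [q, Matrix.sub_mulVec, dotProduct_sub]; ring
  have e6 : 0 ≤ q (M₁ - M₂) u₁ := posSemidef_q h12 _
  have g1 : q M₁⁻¹ v = u₁ ⬝ᵥ v := by rw [q, ← hu₁def, dotProduct_comm]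
  have g2 : q M₂⁻¹ v = u₂ ⬝ᵥ v := by rw [q, ← hu₂def, dotProduct_comm]
  linarith

/-! ### Simultaneous diagonalization -/

lemma eigenvalue_mem_image (T : Module.End ℝ (EuclideanSpace ℝ (Fin n))) (hT : T.IsSymmetric)
    (μ : ℝ) (hμ : Module.End.eigenspace T μ ≠ ⊥) :
    μ ∈ Finset.image (hT.eigenvalues finrank_euclideanSpace_fin) Finset.univ := by
  have hev : T.HasEigenvalue μ := hμ
  obtain ⟨w, hw⟩ := hev.exists_hasEigenvector
  set b := hT.eigenvectorBasis finrank_euclideanSpace_fin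
  have hw0 : b.repr w ≠ 0 := by
    simpa using fun h => hw.2 (by simpa using congrArg b.repr.symm h)
  obtain ⟨i, hi⟩ : ∃ i, b.repr w i ≠ 0 := by
    by_contra h
    push_neg at h
    exact hw0 (by ext j; exact h j)
  refine Finset.mem_image.mpr ⟨i, Finset.mem_univ i, ?_⟩
  have h1 := hT.eigenvectorBasis_apply_self_apply finrank_euclideanSpace_fin w i
  rw [Module.End.mem_eigenspace_iff.mp hw.1] at h1
  rw [_root_.map_smul] at h1
  have : μ * b.repr w i = hT.eigenvalues finrank_euclideanSpace_fin i * b.repr w i := by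
    simpa using h1
  exact (mul_right_cancel₀ hi this).symm

/-- Simultaneous diagonalization of commuting symmetric real matrices. -/
lemma exists_joint_diag (A C : Mat) (hA : A.IsHermitian) (hC : C.IsHermitian)
    (hAC : A * C = C * A) :
    ∃ (U : Mat) (α γ : Fin n → ℝ), star U * U = 1 ∧ U * star U = 1 ∧
      A = U * Matrix.diagonal α * star U ∧ C = U * Matrix.diagonal γ * star U := by
  classical
  set T₁ := Matrix.toEuclideanLin A with hT₁def
  set T₂ := Matrix.toEuclideanLin C with hT₂def
  have hT₁ : T₁.IsSymmetric := (Matrix.isHermitian_iff_isSymmetric).mp hA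
  have hT₂ : T₂.IsSymmetric := (Matrix.isHermitian_iff_isSymmetric).mp hC
  have hmul : ∀ (X Y : Mat), (Matrix.toEuclideanLin X) * (Matrix.toEuclideanLin Y)
      = Matrix.toEuclideanLin (X * Y) := by
    intro X Y
    apply LinearMap.ext
    intro v
    simp [Matrix.toEuclideanLin_apply, Matrix.mulVec_mulVec, Module.End.mul_apply]
  have hcomm : Commute T₁ T₂ := by
    unfold Commute SemiconjBy
    rw [hT₁def, hT₂def, hmul, hmul, hAC]
  have hn : Module.finrank ℝ (EuclideanSpace ℝ (Fin n)) = n := finrank_euclideanSpace_fin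
  set s₁ : Finset ℝ := Finset.image (hT₁.eigenvalues finrank_euclideanSpace_fin) Finset.univ
    with hs₁def
  set s₂ : Finset ℝ := Finset.image (hT₂.eigenvalues finrank_euclideanSpace_fin) Finset.univ
    with hs₂def
  set s : Finset (ℝ × ℝ) := s₂ ×ˢ s₁ with hsdef
  set V : ↥s → Submodule ℝ (EuclideanSpace ℝ (Fin n)) :=
    fun p => Module.End.eigenspace T₁ (p.1.2) ⊓ Module.End.eigenspace T₂ (p.1.1) with hVdef
  have hOF : OrthogonalFamily ℝ (fun i => ↥(V i)) fun i => (V i).subtypeₗᵢ :=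
    (hT₁.orthogonalFamily_eigenspace_inf_eigenspace hT₂).comp Subtype.val_injective
  have hbot : ∀ p : ℝ × ℝ, p ∉ s →
      Module.End.eigenspace T₁ p.2 ⊓ Module.End.eigenspace T₂ p.1 = ⊥ := by
    intro p hp
    rw [hsdef, Finset.mem_product, not_and_or] at hp
    rcases hp with hp | hp
    · have : Module.End.eigenspace T₂ p.1 = ⊥ := by
        by_contra h
        exact hp (eigenvalue_mem_image T₂ hT₂ p.1 h)
      rw [this, inf_bot_eq]
    · have : Module.End.eigenspace T₁ p.2 = ⊥ := by
        by_contra h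
        exact hp (eigenvalue_mem_image T₁ hT₁ p.2 h)
      rw [this, bot_inf_eq]
  have hIsInt : DirectSum.IsInternal V := by
    rw [hOF.isInternal_iff]
    rw [Submodule.orthogonal_eq_bot_iff]
    have htop := hT₁.iSup_iSup_eigenspace_inf_eigenspace_eq_top_of_commute hT₂ hcomm
    rw [eq_top_iff]
    rw [← htop]
    refine iSup_le fun μ => iSup_le fun ν => ?_
    by_cases hmem : ((ν, μ) : ℝ × ℝ) ∈ s
    · exact le_trans (le_of_eq rfl) (le_iSup V ⟨(ν, μ), hmem⟩)
    · rw [show Module.End.eigenspace T₁ μ ⊓ Module.End.eigenspace T₂ ν = ⊥ from hbot (ν, μ) hmem]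
      exact bot_le
  set b := hIsInt.subordinateOrthonormalBasis hn hOF with hbdef
  set idx : Fin n → ↥s := fun i => hIsInt.subordinateOrthonormalBasisIndex hn i hOF with hidxdef
  have hmem : ∀ i, b i ∈ V (idx i) := fun i =>
    hIsInt.subordinateOrthonormalBasis_subordinate hn i hOF
  set α : Fin n → ℝ := fun i => (idx i).1.2 with hαdef
  set γ : Fin n → ℝ := fun i => (idx i).1.1 with hγdef
  have hTb₁ : ∀ i, T₁ (b i) = α i • b i := fun i =>
    Module.End.mem_eigenspace_iff.mp (hmem i).1
  have hTb₂ : ∀ i, T₂ (b i) = γ i • b i := fun i =>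
    Module.End.mem_eigenspace_iff.mp (hmem i).2
  set U : Mat := Matrix.of (fun i j => (b j) i) with hUdef
  have hUnit : star U * U = 1 := by
    ext j k
    have horth := orthonormal_iff_ite.mp b.orthonormal j k
    simp only [PiLp.inner_apply, RCLike.inner_apply, starRingEnd_apply, star_trivial] at horth
    simp only [Matrix.mul_apply, Matrix.star_apply, Matrix.one_apply, hUdef, Matrix.of_apply,
      star_trivial]
    rw [← horth]; exact Finset.sum_congr rfl fun _ _ => mul_comm _ _
  have hUnit' : U * star U = 1 := mul_eq_one_comm.mp hUnit
  have key : ∀ (X : Mat) (d : Fin n → ℝ),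
      (∀ j, Matrix.toEuclideanLin X (b j) = d j • b j) → X = U * Matrix.diagonal d * star U := by
    intro X d hX
    have hXU : X * U = U * Matrix.diagonal d := by
      ext i j
      have := congrFun (congrArg (fun (z : EuclideanSpace ℝ (Fin n)) => (z : Fin n → ℝ)) (hX j)) i
      simp only [Matrix.toEuclideanLin_apply] at this
      simp only [Matrix.mul_apply, hUdef, Matrix.of_apply]
      calc ∑ k, X i k * (b j) k = (X *ᵥ (fun k => (b j) k)) i := by rw [Matrix.mulVec]; rfl
        _ = d j * (b j) i := by simpa using this
        _ = ∑ k, (b k) i * Matrix.diagonal d k j := by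
            rw [Finset.sum_eq_single j]
            · simp [Matrix.diagonal_apply_eq]; ring
            · intro k _ hk
              exact mul_eq_zero_of_right _ (Matrix.diagonal_apply_ne d hk)
            · intro h; exact absurd (Finset.mem_univ j) h
    calc X = X * (U * star U) := by rw [hUnit', mul_one]
      _ = (X * U) * star U := by rw [mul_assoc]
      _ = U * Matrix.diagonal d * star U := by rw [hXU]
  exact ⟨U, α, γ, hUnit, hUnit', key A α hTb₁, key C γ hTb₂⟩

/-! ### Well-definedness of the spectral power -/

lemma conj_pow (U D V : Mat) (hVU : V * U = 1) (k : ℕ) :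
    (U * D * V) ^ k = U * D ^ k * V := by
  induction k with
  | zero => simp [mul_eq_one_comm.mp hVU]
  | succ k ih =>
      rw [pow_succ, ih, pow_succ]
      calc U * D ^ k * V * (U * D * V) = U * D ^ k * (V * U) * D * V := by
            simp only [Matrix.mul_assoc]
        _ = U * (D ^ k * D) * V := by rw [hVU]; simp only [Matrix.mul_assoc, Matrix.mul_one]
        _ = _ := by simp only [Matrix.mul_assoc]

lemma aeval_conj (U : Mat) (hVU : star U * U = 1) (d : Fin n → ℝ) (q : Polynomial ℝ) :
    Polynomial.aeval (U * Matrix.diagonal d * star U) q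
      = U * Matrix.diagonal (fun i => Polynomial.eval (d i) q) * star U := by
  induction q using Polynomial.induction_on' with
  | add f g hf hg =>
      rw [map_add, hf, hg]
      have e2 : (Matrix.diagonal fun i => Polynomial.eval (d i) (f + g))
          = Matrix.diagonal (fun i => Polynomial.eval (d i) f)
            + Matrix.diagonal (fun i => Polynomial.eval (d i) g) := by
        ext i j
        rcases eq_or_ne i j with rfl | h
        · simp
        · simp [Matrix.diagonal_apply_ne _ h]
      rw [e2, Matrix.mul_add, Matrix.add_mul]
  | monomial k c =>
      have hpow := conj_pow U (Matrix.diagonal d) (star U) hVU k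
      rw [Polynomial.aeval_monomial]
      calc (algebraMap ℝ Mat) c * (U * Matrix.diagonal d * star U) ^ k
          = c • (U * Matrix.diagonal (fun i => d i ^ k) * star U) := by
            rw [hpow, Matrix.diagonal_pow, Algebra.algebraMap_eq_smul_one, smul_mul_assoc, one_mul]
            rfl
        _ = U * Matrix.diagonal (fun i => Polynomial.eval (d i) ((Polynomial.monomial k) c))
            * star U := by
            have e3 : Matrix.diagonal (fun i => Polynomial.eval (d i) ((Polynomial.monomial k) c))
                = c • Matrix.diagonal (fun i => d i ^ k) := by
              ext i j
              rcases eq_or_ne i j with rfl | h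
              · simp [Polynomial.eval_monomial]
              · simp [Matrix.diagonal_apply_ne _ h]
            rw [e3, Matrix.mul_smul, Matrix.smul_mul]

/-- well-definedness of the spectral power: any unitary diagonalization computes it. -/
lemma herPow_eq_of_diag (A : Mat) (hA : A.IsHermitian) (U : Mat)
    (hU : star U * U = 1) (d : Fin n → ℝ) (hd : A = U * Matrix.diagonal d * star U) (p : ℝ) :
    herPow A hA p = U * Matrix.diagonal (fun i => d i ^ p) * star U := by
  classical
  set V : Mat := hA.eigenvectorUnitary.1 with hVdef
  have hV : star V * V = 1 := by
    simpa [hVdef] using hA.eigenvectorUnitary.2.1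
  have hspec : A = V * Matrix.diagonal hA.eigenvalues * star V := by
    have := hA.spectral_theorem
    simpa [hVdef, Function.comp] using this
  set t : Finset ℝ := (Finset.image d Finset.univ) ∪ (Finset.image hA.eigenvalues Finset.univ)
    with htdef
  set qpoly : Polynomial ℝ := Lagrange.interpolate t id (fun x => x ^ p) with hqdef
  have heval : ∀ x ∈ t, Polynomial.eval x qpoly = x ^ p := by
    intro x hx
    exact Lagrange.eval_interpolate_at_node _ (Set.injOn_id _) hx
  have h1 : Polynomial.aeval A qpoly = U * Matrix.diagonal (fun i => d i ^ p) * star U := by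
    have e : (fun i => Polynomial.eval (d i) qpoly) = fun i => d i ^ p :=
      funext fun i =>
        heval (d i) (Finset.mem_union_left _ (Finset.mem_image_of_mem d (Finset.mem_univ i)))
    calc Polynomial.aeval A qpoly
        = U * Matrix.diagonal (fun i => Polynomial.eval (d i) qpoly) * star U := by
          conv_lhs => rw [hd]
          exact aeval_conj U hU d qpoly
      _ = _ := by rw [e]
  have h2 : Polynomial.aeval A qpoly = herPow A hA p := by
    have e : (fun i => Polynomial.eval (hA.eigenvalues i) qpoly)
        = fun i => hA.eigenvalues i ^ p :=
      funext fun i =>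
        heval _ (Finset.mem_union_right _ (Finset.mem_image_of_mem _ (Finset.mem_univ i)))
    calc Polynomial.aeval A qpoly
        = V * Matrix.diagonal (fun i => Polynomial.eval (hA.eigenvalues i) qpoly) * star V := by
          conv_lhs => rw [hspec]
          exact aeval_conj V hV hA.eigenvalues qpoly
      _ = herPow A hA p := by rw [e]; rfl
  rw [← h1, h2]

/-! ### Conjugated diagonal matrices -/

lemma star_mat_eq (U : Mat) : star U = U.transpose := by
  ext i j
  simp [Matrix.star_apply]

lemma conj_diag_mul (U : Mat) (hU : star U * U = 1) (d e : Fin n → ℝ) :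
    (U * Matrix.diagonal d * star U) * (U * Matrix.diagonal e * star U)
      = U * Matrix.diagonal (fun i => d i * e i) * star U := by
  calc (U * Matrix.diagonal d * star U) * (U * Matrix.diagonal e * star U)
      = U * Matrix.diagonal d * (star U * U) * Matrix.diagonal e * star U := by
        simp only [Matrix.mul_assoc]
    _ = U * (Matrix.diagonal d * Matrix.diagonal e) * star U := by
        rw [hU]; simp only [Matrix.mul_one, Matrix.mul_assoc]
    _ = _ := by rw [Matrix.diagonal_mul_diagonal]

lemma conj_diag_herm (U : Mat) (d : Fin n → ℝ) :
    (U * Matrix.diagonal d * star U).IsHermitian := by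
  unfold Matrix.IsHermitian
  rw [Matrix.conjTranspose_mul, Matrix.conjTranspose_mul]
  rw [show (star U : Mat)ᴴ = U from by simp [Matrix.star_eq_conjTranspose]]
  rw [Matrix.diagonal_conjTranspose]
  rw [show (star d : Fin n → ℝ) = d from by funext i; simp]
  rw [show (U : Mat)ᴴ = star U from by simp [Matrix.star_eq_conjTranspose]]
  rw [Matrix.mul_assoc]

lemma qform_conj_diag (U : Mat) (d : Fin n → ℝ) (v : Fin n → ℝ) :
    q (U * Matrix.diagonal d * star U) v
      = ∑ k, d k * ((star U *ᵥ v) k)^2 := by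
  unfold q
  set w := star U *ᵥ v with hw
  have h1 : (U * Matrix.diagonal d * star U) *ᵥ v = U *ᵥ (Matrix.diagonal d *ᵥ w) := by
    rw [hw, ← Matrix.mulVec_mulVec, ← Matrix.mulVec_mulVec]
  rw [h1]
  have h2 : v ⬝ᵥ (U *ᵥ (Matrix.diagonal d *ᵥ w)) = w ⬝ᵥ (Matrix.diagonal d *ᵥ w) := by
    rw [Matrix.dotProduct_mulVec, hw, star_mat_eq, Matrix.mulVec_transpose]
  rw [h2]
  rw [dotProduct]
  apply Finset.sum_congr rfl
  intro k _
  rw [Matrix.mulVec_diagonal]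
  ring

lemma mulVec_star_ne (U : Mat) (hU' : U * star U = 1) {v : Fin n → ℝ} (hv : v ≠ 0) :
    star U *ᵥ v ≠ 0 := by
  intro h
  apply hv
  have : U *ᵥ (star U *ᵥ v) = v := by
    rw [Matrix.mulVec_mulVec, hU', Matrix.one_mulVec]
  rw [h, Matrix.mulVec_zero] at this
  exact this.symm

lemma posDef_conj_diag (U : Mat) (hU : star U * U = 1) (hU' : U * star U = 1)
    (d : Fin n → ℝ) (hd : ∀ k, 0 < d k) : (U * Matrix.diagonal d * star U).PosDef := by
  refine posDef_iff_dotProduct_mulVec.mpr ⟨conj_diag_herm U d, fun v hv => ?_⟩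
  rw [star_trivial]
  have : v ⬝ᵥ (U * Matrix.diagonal d * star U) *ᵥ v = ∑ k, d k * ((star U *ᵥ v) k)^2 :=
    qform_conj_diag U d v
  rw [this]
  have hw : star U *ᵥ v ≠ 0 := mulVec_star_ne U hU' hv
  obtain ⟨k, hk⟩ : ∃ k, (star U *ᵥ v) k ≠ 0 := by
    by_contra h
    push_neg at h
    exact hw (funext h)
  apply Finset.sum_pos' (fun k _ => mul_nonneg (le_of_lt (hd k)) (sq_nonneg _))
  exact ⟨k, Finset.mem_univ k, mul_pos (hd k) (by positivity)⟩

lemma conj_diag_inv (U : Mat) (hU : star U * U = 1) (hU' : U * star U = 1)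
    (d : Fin n → ℝ) (hd : ∀ k, d k ≠ 0) :
    (U * Matrix.diagonal d * star U)⁻¹ = U * Matrix.diagonal (fun k => (d k)⁻¹) * star U := by
  apply Matrix.inv_eq_right_inv
  rw [conj_diag_mul U hU]
  have : (fun i => d i * (d i)⁻¹) = fun _ => (1:ℝ) := by
    funext i; exact mul_inv_cancel₀ (hd i)
  rw [this, Matrix.diagonal_one, Matrix.mul_one, hU']

lemma diag_pos_of_posDef (A U : Mat) (d : Fin n → ℝ) (hA : A.PosDef)
    (hU : star U * U = 1) (hd : A = U * Matrix.diagonal d * star U) (k : Fin n) : 0 < d k := by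
  have hAU : A * U = U * Matrix.diagonal d := by
    rw [hd]
    calc U * Matrix.diagonal d * star U * U = U * Matrix.diagonal d * (star U * U) := by
          simp only [Matrix.mul_assoc]
      _ = U * Matrix.diagonal d := by rw [hU, Matrix.mul_one]
  set e : Fin n → ℝ := Pi.single k 1 with hedef
  set u : Fin n → ℝ := U *ᵥ e with hudef
  have hu : u ≠ 0 := by
    intro h
    have he : e = 0 := by
      have : star U *ᵥ u = e := by
        rw [hudef, Matrix.mulVec_mulVec, hU, Matrix.one_mulVec]
      rw [← this, h, Matrix.mulVec_zero]
    have := congrFun he k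
    simp [hedef] at this
  have hq := hA.dotProduct_mulVec_pos hu
  rw [star_trivial] at hq
  have : u ⬝ᵥ A *ᵥ u = d k := by
    have h1 : A *ᵥ u = U *ᵥ (Matrix.diagonal d *ᵥ e) := by
      rw [hudef, Matrix.mulVec_mulVec, hAU, ← Matrix.mulVec_mulVec]
    rw [h1]
    have h2 : u ⬝ᵥ (U *ᵥ (Matrix.diagonal d *ᵥ e)) = (star U *ᵥ u) ⬝ᵥ (Matrix.diagonal d *ᵥ e) := by
      rw [Matrix.dotProduct_mulVec, star_mat_eq, Matrix.mulVec_transpose]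
    have h3 : star U *ᵥ u = e := by
      rw [hudef, Matrix.mulVec_mulVec, hU, Matrix.one_mulVec]
    rw [h2, h3, hedef, Matrix.diagonal_mulVec_single, single_dotProduct]
    simp
  rw [this] at hq
  exact hq

lemma conj_diag_add_smul (U : Mat) (d e : Fin n → ℝ) (c : ℝ) :
    (U * Matrix.diagonal d * star U) + c • (U * Matrix.diagonal e * star U)
      = U * Matrix.diagonal (fun k => d k + c * e k) * star U := by
  have e1 : c • (U * Matrix.diagonal e * star U) = U * (c • Matrix.diagonal e) * star U := by
    rw [Matrix.mul_smul, Matrix.smul_mul]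
  rw [e1, ← Matrix.add_mul, ← Matrix.mul_add]
  congr 2
  ext i j
  rcases eq_or_ne i j with rfl | h
  · simp
  · simp [Matrix.diagonal_apply_ne _ h]

end InterpAux

namespace InterpAux

open MeasureTheory Set

/-! ### Scalar integrals -/

variable {p : ℝ}

def g (p : ℝ) (μ : ℝ) : ℝ := μ ^ (p - 1) * (1 + μ)⁻¹

lemma g_contOn : ContinuousOn (g p) (Ioi 0) := by
  apply ContinuousOn.mul
  · exact ContinuousOn.rpow_const continuousOn_id (fun x hx => Or.inl (ne_of_gt hx))
  · apply ContinuousOn.inv₀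
    · exact (continuous_const.add continuous_id).continuousOn
    · intro x hx
      have : (0:ℝ) < x := hx
      positivity

lemma g_pos {μ : ℝ} (hμ : 0 < μ) : 0 < g p μ := by
  have h1 : 0 < μ ^ (p - 1) := Real.rpow_pos_of_pos hμ _
  have h2 : (0:ℝ) < 1 + μ := by linarith
  exact mul_pos h1 (inv_pos.mpr h2)

lemma g_integrableOn (hp0 : 0 < p) (hp1 : p < 1) : IntegrableOn (g p) (Ioi 0) := by
  have hsplit : Ioc (0:ℝ) 1 ∪ Ioi (1:ℝ) = Ioi 0 := Ioc_union_Ioi_eq_Ioi zero_le_one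
  rw [← hsplit]
  apply IntegrableOn.union
  · have hi : IntegrableOn (fun μ : ℝ => μ ^ (p - 1)) (Ioc (0:ℝ) 1) := by
      have := intervalIntegral.intervalIntegrable_rpow' (a := 0) (b := 1) (r := p - 1)
        (by linarith)
      rw [intervalIntegrable_iff] at this
      simpa [uIoc_of_le (zero_le_one : (0:ℝ) ≤ 1)] using this
    apply Integrable.mono' hi
    · exact (g_contOn.mono (fun x hx => hx.1)).aestronglyMeasurable measurableSet_Ioc
    · filter_upwards [ae_restrict_mem measurableSet_Ioc] with x hx
      have hx0 : 0 < x := hx.1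
      rw [Real.norm_eq_abs, abs_of_pos (g_pos hx0)]
      unfold g
      have h2 : (1 + x)⁻¹ ≤ 1 := by
        rw [inv_le_one_iff₀]
        right; linarith
      calc x ^ (p-1) * (1+x)⁻¹ ≤ x ^ (p-1) * 1 := by
            apply mul_le_mul_of_nonneg_left h2 (le_of_lt (Real.rpow_pos_of_pos hx0 _))
        _ = x ^ (p-1) := mul_one _
  · have hi : IntegrableOn (fun μ : ℝ => μ ^ (p - 2)) (Ioi (1:ℝ)) :=
      integrableOn_Ioi_rpow_of_lt (by linarith) one_pos
    apply Integrable.mono' hi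
    · exact (g_contOn.mono (fun x (hx : x ∈ Ioi (1:ℝ)) => mem_Ioi.mpr (lt_trans one_pos (mem_Ioi.mp hx)))).aestronglyMeasurable
        measurableSet_Ioi
    · filter_upwards [ae_restrict_mem measurableSet_Ioi] with x hx
      have hx0 : (0:ℝ) < x := lt_trans one_pos hx
      rw [Real.norm_eq_abs, abs_of_pos (g_pos hx0)]
      unfold g
      have h2 : (1 + x)⁻¹ ≤ x⁻¹ := by
        apply inv_anti₀ hx0
        linarith
      calc x ^ (p-1) * (1+x)⁻¹ ≤ x ^ (p-1) * x⁻¹ := by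
            apply mul_le_mul_of_nonneg_left h2 (le_of_lt (Real.rpow_pos_of_pos hx0 _))
        _ = x ^ (p-2) := by
            rw [← Real.rpow_neg_one x, ← Real.rpow_add hx0]
            ring_nf

def K (p : ℝ) : ℝ := ∫ μ in Ioi (0:ℝ), g p μ

lemma K_pos (hp0 : 0 < p) (hp1 : p < 1) : 0 < K p := by
  rw [K, MeasureTheory.setIntegral_pos_iff_support_of_nonneg_ae]
  · have hsub : Ioi (0:ℝ) ⊆ Function.support (g p) ∩ Ioi 0 := by
      intro x hx
      exact ⟨ne_of_gt (g_pos hx), hx⟩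
    calc (0:ENNReal) < ⊤ := by norm_num
      _ = volume (Ioi (0:ℝ)) := Real.volume_Ioi.symm
      _ ≤ volume (Function.support (g p) ∩ Ioi 0) := measure_mono hsub
  · filter_upwards [ae_restrict_mem measurableSet_Ioi] with x hx
    exact le_of_lt (g_pos hx)
  · exact g_integrableOn hp0 hp1

/-- the scaled integrand -/
def f (p b d : ℝ) (lam : ℝ) : ℝ := lam ^ (p - 1) * (d⁻¹ + lam * b⁻¹)⁻¹

lemma f_eq {b d : ℝ} (hb : 0 < b) (hd : 0 < d) {lam : ℝ} (hlam : 0 < lam) :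
    f p b d lam = ((b/d) ^ (p-1) * d) • g p ((b/d)⁻¹ * lam) := by
  set c := b / d with hcdef
  have hc : 0 < c := div_pos hb hd
  have e1 : d⁻¹ + lam * b⁻¹ = d⁻¹ * (1 + c⁻¹ * lam) := by
    rw [hcdef, inv_div, mul_add, mul_one, ← mul_assoc, ← mul_div_assoc, inv_mul_cancel₀ hd.ne',
      one_div]
    ring
  unfold f g
  rw [e1]
  rw [Real.mul_rpow (le_of_lt (inv_pos.mpr hc)) (le_of_lt hlam)]
  rw [mul_inv, inv_inv]
  have hcp : c⁻¹ ^ (p - 1) = (c ^ (p-1))⁻¹ := Real.inv_rpow (le_of_lt hc) _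
  rw [smul_eq_mul, hcp]
  have h1 : (0:ℝ) < 1 + c⁻¹ * lam := by positivity
  field_simp

lemma f_integrableOn (hp0 : 0 < p) (hp1 : p < 1) {b d : ℝ} (hb : 0 < b) (hd : 0 < d) :
    IntegrableOn (f p b d) (Ioi 0) := by
  set c := b / d with hcdef
  have hc : 0 < c := div_pos hb hd
  have h0 := g_integrableOn hp0 hp1
  have h1 : IntegrableOn (fun lam => g p (c⁻¹ * lam)) (Ioi 0) := by
    have h2 := (integrableOn_Ioi_comp_mul_left_iff (g p) 0 (inv_pos.mpr hc))
    rw [mul_zero] at h2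
    exact h2.mpr h0
  have h2 : IntegrableOn (fun lam => (c ^ (p-1) * d) • g p (c⁻¹ * lam)) (Ioi 0) :=
    Integrable.smul (c ^ (p-1) * d) h1
  apply h2.congr_fun ?_ measurableSet_Ioi
  intro x hx
  exact (f_eq hb hd hx).symm

lemma f_integral (hp0 : 0 < p) (hp1 : p < 1) {b d : ℝ} (hb : 0 < b) (hd : 0 < d) :
    ∫ lam in Ioi (0:ℝ), f p b d lam = (b ^ p * d ^ (1 - p)) * K p := by
  set c := b / d with hcdef
  have hc : 0 < c := div_pos hb hd
  have e0 : ∫ lam in Ioi (0:ℝ), f p b d lam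
      = ∫ lam in Ioi (0:ℝ), (c ^ (p-1) * d) • g p (c⁻¹ * lam) := by
    apply setIntegral_congr_fun measurableSet_Ioi
    intro x hx
    exact f_eq hb hd hx
  rw [e0, integral_smul, MeasureTheory.integral_comp_mul_left_Ioi (g p) 0 (inv_pos.mpr hc),
    inv_inv, mul_zero, smul_eq_mul, smul_eq_mul, ← K]
  have e2 : c ^ (p - 1) * d * (c * K p) = (c ^ (p-1) * c) * d * K p := by ring
  rw [e2]
  have e1 : c ^ (p - 1) * c = c ^ p := by
    nth_rewrite 2 [← Real.rpow_one c]
    rw [← Real.rpow_add hc]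
    ring_nf
  rw [e1, hcdef, Real.div_rpow (le_of_lt hb) (le_of_lt hd)]
  have hdp : (0:ℝ) < d ^ p := Real.rpow_pos_of_pos hd _
  have e3 : d ^ (1 - p) = d / d ^ p := by
    rw [Real.rpow_sub hd, Real.rpow_one]
  rw [e3]
  field_simp

/-! ### special values of herPow -/

lemma herPow_one {m : ℕ} (M : Matrix (Fin m) (Fin m) ℝ) (hM : M.IsHermitian) :
    herPow M hM 1 = M := by
  unfold herPow
  have e : (fun i => hM.eigenvalues i ^ (1:ℝ)) = hM.eigenvalues :=
    funext fun i => Real.rpow_one _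
  rw [e]
  have := hM.spectral_theorem
  simpa [Function.comp] using this.symm

lemma herPow_zero {m : ℕ} (M : Matrix (Fin m) (Fin m) ℝ) (hM : M.IsHermitian) :
    herPow M hM 0 = 1 := by
  unfold herPow
  have e : (fun i => hM.eigenvalues i ^ (0:ℝ)) = fun _ => (1:ℝ) :=
    funext fun i => Real.rpow_zero _
  rw [e, Matrix.diagonal_one, Matrix.mul_one]
  simpa using hM.eigenvectorUnitary.2.2

end InterpAux

/-- matrix interpolation inequality: for commuting pairs of symmetric
positive definite matrices with `B - A > 0` and `D - C ≥ 0`, one has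
`B^p D^(1-p) - A^p C^(1-p) > 0` for all `0 < p ≤ 1`. -/
theorem matrix_interpolation_strict {n : ℕ}
    (A B C D : Matrix (Fin n) (Fin n) ℝ)
    (hA : A.PosDef) (hB : B.PosDef) (hC : C.PosDef) (hD : D.PosDef)
    (hAC : A * C = C * A) (hBD : B * D = D * B)
    (hBA : (B - A).PosDef) (hDC : (D - C).PosSemidef)
    (p : ℝ) (hp0 : 0 < p) (hp1 : p ≤ 1) :
    (herPow B hB.1 p * herPow D hD.1 (1 - p)
      - herPow A hA.1 p * herPow C hC.1 (1 - p)).PosDef := by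
  classical
  open InterpAux MeasureTheory Set in
  rcases eq_or_lt_of_le hp1 with hp1' | hp1'
  · -- p = 1
    subst hp1'
    rw [herPow_one B hB.1, herPow_one A hA.1, sub_self, herPow_zero D hD.1, herPow_zero C hC.1,
      mul_one, mul_one]
    exact hBA
  -- now 0 < p < 1
  obtain ⟨U₁, α, γ, hU₁, hU₁', hAeq, hCeq⟩ := exists_joint_diag A C hA.1 hC.1 hAC
  obtain ⟨U₂, β, δ, hU₂, hU₂', hBeq, hDeq⟩ := exists_joint_diag B D hB.1 hD.1 hBD
  have hα : ∀ k, 0 < α k := diag_pos_of_posDef A U₁ α hA hU₁ hAeq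
  have hγ : ∀ k, 0 < γ k := diag_pos_of_posDef C U₁ γ hC hU₁ hCeq
  have hβ : ∀ k, 0 < β k := diag_pos_of_posDef B U₂ β hB hU₂ hBeq
  have hδ : ∀ k, 0 < δ k := diag_pos_of_posDef D U₂ δ hD hU₂ hDeq
  -- products of powers in conjugated-diagonal form
  have hPA : herPow A hA.1 p * herPow C hC.1 (1-p)
      = U₁ * Matrix.diagonal (fun k => α k ^ p * γ k ^ (1-p)) * star U₁ := by
    rw [herPow_eq_of_diag A hA.1 U₁ hU₁ α hAeq p,
      herPow_eq_of_diag C hC.1 U₁ hU₁ γ hCeq (1-p), conj_diag_mul U₁ hU₁]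
  have hPB : herPow B hB.1 p * herPow D hD.1 (1-p)
      = U₂ * Matrix.diagonal (fun k => β k ^ p * δ k ^ (1-p)) * star U₂ := by
    rw [herPow_eq_of_diag B hB.1 U₂ hU₂ β hBeq p,
      herPow_eq_of_diag D hD.1 U₂ hU₂ δ hDeq (1-p), conj_diag_mul U₂ hU₂]
  have hHerm : (herPow B hB.1 p * herPow D hD.1 (1 - p)
      - herPow A hA.1 p * herPow C hC.1 (1 - p)).IsHermitian := by
    rw [hPA, hPB]
    exact (conj_diag_herm U₂ _).sub (conj_diag_herm U₁ _)
  refine posDef_iff_dotProduct_mulVec.mpr ⟨hHerm, fun v hv => ?_⟩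
  rw [star_trivial]
  have hgoal : v ⬝ᵥ (herPow B hB.1 p * herPow D hD.1 (1 - p)
      - herPow A hA.1 p * herPow C hC.1 (1 - p)) *ᵥ v
      = q (herPow B hB.1 p * herPow D hD.1 (1-p)) v
        - q (herPow A hA.1 p * herPow C hC.1 (1-p)) v := q_sub _ _ v
  rw [hgoal, sub_pos]
  -- inverses
  have hAinv : A⁻¹ = U₁ * Matrix.diagonal (fun k => (α k)⁻¹) * star U₁ := by
    rw [hAeq]; exact conj_diag_inv U₁ hU₁ hU₁' α (fun k => (hα k).ne')
  have hCinv : C⁻¹ = U₁ * Matrix.diagonal (fun k => (γ k)⁻¹) * star U₁ := by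
    rw [hCeq]; exact conj_diag_inv U₁ hU₁ hU₁' γ (fun k => (hγ k).ne')
  have hBinv : B⁻¹ = U₂ * Matrix.diagonal (fun k => (β k)⁻¹) * star U₂ := by
    rw [hBeq]; exact conj_diag_inv U₂ hU₂ hU₂' β (fun k => (hβ k).ne')
  have hDinv : D⁻¹ = U₂ * Matrix.diagonal (fun k => (δ k)⁻¹) * star U₂ := by
    rw [hDeq]; exact conj_diag_inv U₂ hU₂ hU₂' δ (fun k => (hδ k).ne')
  -- the matrices under the integral
  have hMAeq : ∀ lam : ℝ, C⁻¹ + lam • A⁻¹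
      = U₁ * Matrix.diagonal (fun k => (γ k)⁻¹ + lam * (α k)⁻¹) * star U₁ := by
    intro lam
    rw [hAinv, hCinv, conj_diag_add_smul]
  have hMBeq : ∀ lam : ℝ, D⁻¹ + lam • B⁻¹
      = U₂ * Matrix.diagonal (fun k => (δ k)⁻¹ + lam * (β k)⁻¹) * star U₂ := by
    intro lam
    rw [hBinv, hDinv, conj_diag_add_smul]
  have hMA_pd : ∀ lam : ℝ, 0 < lam → (C⁻¹ + lam • A⁻¹).PosDef := by
    intro lam hlam
    rw [hMAeq lam]
    refine posDef_conj_diag U₁ hU₁ hU₁' _ fun k => ?_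
    have h1 := hα k
    have h2 := hγ k
    positivity
  have hMB_pd : ∀ lam : ℝ, 0 < lam → (D⁻¹ + lam • B⁻¹).PosDef := by
    intro lam hlam
    rw [hMBeq lam]
    refine posDef_conj_diag U₂ hU₂ hU₂' _ fun k => ?_
    have h1 := hβ k
    have h2 := hδ k
    positivity
  -- positivity of the difference of the integrand matrices
  have hABinv : ∀ v', v' ≠ 0 → q B⁻¹ v' < q A⁻¹ v' := by
    intro v' hv'
    exact q_inv_lt hB hA hBA hv'
  have hCDinv : ∀ v', q D⁻¹ v' ≤ q C⁻¹ v' := fun v' => q_inv_le hD hC hDC v'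
  have hdiff_pd : ∀ lam : ℝ, 0 < lam →
      ((C⁻¹ + lam • A⁻¹) - (D⁻¹ + lam • B⁻¹)).PosDef := by
    intro lam hlam
    refine posDef_iff_dotProduct_mulVec.mpr ⟨?_, fun v' hv' => ?_⟩
    · have h1 := conj_diag_herm U₁ (fun k => (γ k)⁻¹ + lam * (α k)⁻¹)
      have h2 := conj_diag_herm U₂ (fun k => (δ k)⁻¹ + lam * (β k)⁻¹)
      rw [← hMAeq lam] at h1
      rw [← hMBeq lam] at h2
      exact h1.sub h2
    · rw [star_trivial]
      have : v' ⬝ᵥ ((C⁻¹ + lam • A⁻¹) - (D⁻¹ + lam • B⁻¹)) *ᵥ v'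
          = (q C⁻¹ v' + lam * q A⁻¹ v') - (q D⁻¹ v' + lam * q B⁻¹ v') := by
        rw [show v' ⬝ᵥ ((C⁻¹ + lam • A⁻¹) - (D⁻¹ + lam • B⁻¹)) *ᵥ v'
            = q ((C⁻¹ + lam • A⁻¹) - (D⁻¹ + lam • B⁻¹)) v' from rfl]
        rw [q_sub, q_add, q_add, q_smul, q_smul]
      rw [this]
      have h1 := hABinv v' hv'
      have h2 := hCDinv v'
      nlinarith
  -- coordinates
  set w₁ : Fin n → ℝ := star U₁ *ᵥ v with hw₁def
  set w₂ : Fin n → ℝ := star U₂ *ᵥ v with hw₂def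
  -- integrand functions
  set FA : ℝ → ℝ := fun lam => ∑ k, (w₁ k)^2 * f p (α k) (γ k) lam with hFAdef
  set FB : ℝ → ℝ := fun lam => ∑ k, (w₂ k)^2 * f p (β k) (δ k) lam with hFBdef
  have hFA_int : IntegrableOn FA (Ioi 0) := by
    apply integrable_finset_sum
    intro k _
    exact Integrable.const_mul (f_integrableOn hp0 hp1' (hα k) (hγ k)) ((w₁ k)^2)
  have hFB_int : IntegrableOn FB (Ioi 0) := by
    apply integrable_finset_sum
    intro k _
    exact Integrable.const_mul (f_integrableOn hp0 hp1' (hβ k) (hδ k)) ((w₂ k)^2)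
  have hFA_val : ∫ lam in Ioi (0:ℝ), FA lam
      = q (herPow A hA.1 p * herPow C hC.1 (1-p)) v * K p := by
    rw [hFAdef]
    rw [integral_finset_sum _ (fun k _ =>
      Integrable.const_mul (f_integrableOn hp0 hp1' (hα k) (hγ k)) ((w₁ k)^2))]
    have e1 : ∀ k : Fin n, ∫ lam in Ioi (0:ℝ), (w₁ k)^2 * f p (α k) (γ k) lam
        = (w₁ k)^2 * ((α k ^ p * γ k ^ (1-p)) * K p) := by
      intro k
      rw [MeasureTheory.integral_const_mul, f_integral hp0 hp1' (hα k) (hγ k)]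
    rw [Finset.sum_congr rfl fun k _ => e1 k]
    rw [hPA, qform_conj_diag, ← hw₁def, Finset.sum_mul]
    apply Finset.sum_congr rfl
    intro k _
    ring
  have hFB_val : ∫ lam in Ioi (0:ℝ), FB lam
      = q (herPow B hB.1 p * herPow D hD.1 (1-p)) v * K p := by
    rw [hFBdef]
    rw [integral_finset_sum _ (fun k _ =>
      Integrable.const_mul (f_integrableOn hp0 hp1' (hβ k) (hδ k)) ((w₂ k)^2))]
    have e1 : ∀ k : Fin n, ∫ lam in Ioi (0:ℝ), (w₂ k)^2 * f p (β k) (δ k) lam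
        = (w₂ k)^2 * ((β k ^ p * δ k ^ (1-p)) * K p) := by
      intro k
      rw [MeasureTheory.integral_const_mul, f_integral hp0 hp1' (hβ k) (hδ k)]
    rw [Finset.sum_congr rfl fun k _ => e1 k]
    rw [hPB, qform_conj_diag, ← hw₂def, Finset.sum_mul]
    apply Finset.sum_congr rfl
    intro k _
    ring
  -- pointwise comparison
  have hFA_form : ∀ lam : ℝ, 0 < lam →
      FA lam = lam ^ (p-1) * q (C⁻¹ + lam • A⁻¹)⁻¹ v := by
    intro lam hlam
    have hinv : (C⁻¹ + lam • A⁻¹)⁻¹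
        = U₁ * Matrix.diagonal (fun k => ((γ k)⁻¹ + lam * (α k)⁻¹)⁻¹) * star U₁ := by
      rw [hMAeq lam]
      refine conj_diag_inv U₁ hU₁ hU₁' _ fun k => ?_
      have h1 := hα k
      have h2 := hγ k
      positivity
    rw [hinv, qform_conj_diag, ← hw₁def, hFAdef, Finset.mul_sum]
    apply Finset.sum_congr rfl
    intro k _
    unfold f
    ring
  have hFB_form : ∀ lam : ℝ, 0 < lam →
      FB lam = lam ^ (p-1) * q (D⁻¹ + lam • B⁻¹)⁻¹ v := by
    intro lam hlam
    have hinv : (D⁻¹ + lam • B⁻¹)⁻¹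
        = U₂ * Matrix.diagonal (fun k => ((δ k)⁻¹ + lam * (β k)⁻¹)⁻¹) * star U₂ := by
      rw [hMBeq lam]
      refine conj_diag_inv U₂ hU₂ hU₂' _ fun k => ?_
      have h1 := hβ k
      have h2 := hδ k
      positivity
    rw [hinv, qform_conj_diag, ← hw₂def, hFBdef, Finset.mul_sum]
    apply Finset.sum_congr rfl
    intro k _
    unfold f
    ring
  have hlt : ∀ lam : ℝ, 0 < lam → FA lam < FB lam := by
    intro lam hlam
    rw [hFA_form lam hlam, hFB_form lam hlam]
    apply mul_lt_mul_of_pos_left _ (Real.rpow_pos_of_pos hlam _)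
    exact q_inv_lt (hMA_pd lam hlam) (hMB_pd lam hlam) (hdiff_pd lam hlam) hv
  -- strict inequality of integrals
  have hsub_pos : 0 < ∫ lam in Ioi (0:ℝ), (FB lam - FA lam) := by
    rw [MeasureTheory.setIntegral_pos_iff_support_of_nonneg_ae]
    · have hsupp : Ioi (0:ℝ) ⊆ Function.support (fun lam => FB lam - FA lam) ∩ Ioi 0 :=
        fun x hx => ⟨ne_of_gt (sub_pos.mpr (hlt x hx)), hx⟩
      calc (0:ENNReal) < ⊤ := by norm_num
        _ = volume (Ioi (0:ℝ)) := Real.volume_Ioi.symm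
        _ ≤ volume (Function.support (fun lam => FB lam - FA lam) ∩ Ioi 0) :=
            measure_mono hsupp
    · filter_upwards [ae_restrict_mem measurableSet_Ioi] with x hx
      exact le_of_lt (sub_pos.mpr (hlt x hx))
    · exact hFB_int.sub hFA_int
  rw [MeasureTheory.integral_sub hFB_int hFA_int, hFA_val, hFB_val] at hsub_pos
  have hK := K_pos hp0 hp1'
  by_contra hcon
  push_neg at hcon
  nlinarith
end
end

section
/- Let A, B ∈ M_n(ℝ) be symmetric positive definite matrices with B − A positive definite. Then for every p with 0 < p ≤ 1, the matrix B^p − A^p is positive definite (Löwner's strict monotonicity of the matrix power t ↦ t^p). -/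
open Matrix

noncomputable section

section LoewnerAux

open MeasureTheory Set Real

variable {n : ℕ}

/-- Integrability of the kernel `t ↦ t^(p-1) x/(x+t)` on `(0, ∞)`. -/
private lemma law_kernelIntegrable {p x : ℝ} (hp0 : 0 < p) (hp1 : p < 1) (hx : 0 < x) :
    IntegrableOn (fun t : ℝ => t ^ (p - 1) * (x / (x + t))) (Ioi 0) := by
  have hmeas : ∀ s : Set ℝ, s ⊆ Ioi 0 → MeasurableSet s →
      AEStronglyMeasurable (fun t : ℝ => t ^ (p - 1) * (x / (x + t))) (volume.restrict s) := by
    intro s hs hms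
    refine ContinuousOn.aestronglyMeasurable ?_ hms
    refine ContinuousOn.mul ?_ ?_
    · exact (continuousOn_id.rpow_const (fun t ht => Or.inl (ne_of_gt (hs ht))))
    · exact continuousOn_const.div (continuousOn_const.add continuousOn_id)
        (fun t ht => by have := hs ht; simp at this ⊢; positivity)
  have h1 : IntegrableOn (fun t : ℝ => t ^ (p - 1) * (x / (x + t))) (Ioc 0 1) := by
    have hint : IntegrableOn (fun t : ℝ => t ^ (p - 1)) (Ioc 0 1) :=
      (intervalIntegral.intervalIntegrable_rpow' (by linarith)).1
    refine hint.mono' (hmeas _ Ioc_subset_Ioi_self measurableSet_Ioc) ?_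
    filter_upwards [ae_restrict_mem measurableSet_Ioc] with t ht
    have ht0 : 0 < t := ht.1
    rw [Real.norm_eq_abs, abs_mul, abs_of_nonneg (rpow_nonneg ht0.le _),
      abs_of_nonneg (by positivity)]
    nth_rewrite 2 [← mul_one (t ^ (p-1))]
    gcongr
    rw [div_le_one (by positivity)]
    linarith
  have h2 : IntegrableOn (fun t : ℝ => t ^ (p - 1) * (x / (x + t))) (Ioi 1) := by
    have hint : IntegrableOn (fun t : ℝ => x * t ^ (p - 2)) (Ioi 1) :=
      (integrableOn_Ioi_rpow_of_lt (by linarith) one_pos).const_mul x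
    refine hint.mono' (hmeas _ (fun t ht => mem_Ioi.mpr (lt_trans one_pos (mem_Ioi.mp ht))) measurableSet_Ioi) ?_
    filter_upwards [ae_restrict_mem measurableSet_Ioi] with t ht
    have ht0 : (0:ℝ) < t := lt_trans one_pos ht
    rw [Real.norm_eq_abs, abs_mul, abs_of_nonneg (rpow_nonneg ht0.le _),
      abs_of_nonneg (by positivity)]
    have : x / (x + t) ≤ x / t := by
      gcongr
      linarith
    calc t ^ (p-1) * (x / (x+t)) ≤ t ^ (p-1) * (x / t) :=
          mul_le_mul_of_nonneg_left this (by positivity)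
      _ = x * t ^ (p-2) := by
          rw [div_eq_mul_inv, ← Real.rpow_neg_one t, ← mul_assoc,
            mul_comm (t ^ (p-1)) x, mul_assoc, ← Real.rpow_add ht0]
          congr 2
          ring
  have := h1.union h2
  rwa [Ioc_union_Ioi_eq_Ioi (by norm_num : (0:ℝ) ≤ 1)] at this

/-- Scaling: `∫₀^∞ t^(p-1) x/(x+t) dt = x^p ∫₀^∞ t^(p-1)/(1+t) dt`. -/
private lemma law_kernelScale {p x : ℝ} (hp0 : 0 < p) (hp1 : p < 1) (hx : 0 < x) :
    ∫ t in Ioi (0:ℝ), t ^ (p - 1) * (x / (x + t)) =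
      x ^ p * ∫ t in Ioi (0:ℝ), t ^ (p - 1) * (1 / (1 + t)) := by
  have key := integral_comp_mul_left_Ioi (fun t : ℝ => t ^ (p - 1) * (x / (x + t))) 0 hx
  rw [mul_zero] at key
  have congr1 : ∫ s in Ioi (0:ℝ), (x * s) ^ (p - 1) * (x / (x + x * s)) =
      ∫ s in Ioi (0:ℝ), x ^ (p-1) * (s ^ (p - 1) * (1 / (1 + s))) := by
    refine setIntegral_congr_fun measurableSet_Ioi (fun s hs => ?_)
    have hs0 : (0:ℝ) < s := hs
    rw [Real.mul_rpow hx.le hs0.le]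
    have : x / (x + x * s) = 1 / (1 + s) := by
      rw [div_eq_div_iff (by positivity) (by positivity)]
      ring
    rw [this]; ring
  rw [congr1, integral_const_mul] at key
  have : (∫ t in Ioi (0:ℝ), t ^ (p - 1) * (x / (x + t)))
      = x * (x ^ (p-1) * ∫ s in Ioi (0:ℝ), s ^ (p - 1) * (1 / (1 + s))) := by
    rw [key, smul_eq_mul, ← mul_assoc, mul_inv_cancel₀ hx.ne', one_mul]
  rw [this, ← mul_assoc]
  congr 1
  nth_rewrite 1 [← Real.rpow_one x]
  rw [← Real.rpow_add hx]
  norm_num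

/-- The normalization constant is positive. -/
private lemma law_kernelPos {p : ℝ} (hp0 : 0 < p) (hp1 : p < 1) :
    0 < ∫ t in Ioi (0:ℝ), t ^ (p - 1) * (1 / (1 + t)) := by
  have hint : IntegrableOn (fun t : ℝ => t ^ (p - 1) * (1 / (1 + t))) (Ioi 0) := by
    simpa using law_kernelIntegrable hp0 hp1 one_pos
  have hposn : ∀ t ∈ Ioi (0:ℝ), 0 < t ^ (p - 1) * (1 / (1 + t)) := by
    intro t ht
    have : (0:ℝ) < t := ht
    positivity
  rw [setIntegral_pos_iff_support_of_nonneg_ae ?_ hint]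
  · refine lt_of_lt_of_le ?_ (measure_mono (fun t ht => ⟨(hposn t ht).ne', ht⟩))
    rw [Real.volume_Ioi]
    exact ENNReal.zero_lt_top
  · filter_upwards [ae_restrict_mem measurableSet_Ioi] with t ht
    exact (hposn t ht).le

private lemma law_posDef_conj {M C : Matrix (Fin n) (Fin n) ℝ} (hM : M.PosDef)
    (hC : IsUnit C) : (Cᴴ * M * C).PosDef := by
  refine posDef_iff_dotProduct_mulVec.mpr ⟨isHermitian_conjTranspose_mul_mul C hM.1, fun x hx => ?_⟩
  have hCx : C *ᵥ x ≠ 0 := by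
    have hinj := Matrix.mulVec_injective_iff_isUnit.mpr hC
    intro h
    exact hx (hinj (by simp [h]))
  simpa only [star_mulVec, Matrix.dotProduct_mulVec, vecMul_vecMul] using (posDef_iff_dotProduct_mulVec.mp hM).2 hCx

/-- Strict monotonicity of the matrix inverse. -/
private lemma law_inv_strict_mono {A B : Matrix (Fin n) (Fin n) ℝ}
    (hA : A.PosDef) (hB : B.PosDef) (hBA : (B - A).PosDef) :
    (A⁻¹ - B⁻¹).PosDef := by
  have hAu := hA.isUnit
  have hBu := hB.isUnit
  have hAi := hAu.invertible
  have hBi := hBu.invertible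
  have hBinvH : (B⁻¹)ᴴ = B⁻¹ := by
    rw [Matrix.conjTranspose_nonsing_inv, hB.1.eq]
  have hBAH : (B - A)ᴴ = B - A := hBA.1.eq
  have e1 : ((B - A) * B⁻¹)ᴴ = B⁻¹ * (B - A) := by
    rw [Matrix.conjTranspose_mul, hBinvH, hBAH]
  have key : A⁻¹ - B⁻¹ = (B⁻¹)ᴴ * (B - A) * B⁻¹
      + ((B - A) * B⁻¹)ᴴ * A⁻¹ * ((B - A) * B⁻¹) := by
    rw [e1, hBinvH]
    simp only [Matrix.sub_mul, Matrix.mul_sub, Matrix.mul_assoc,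
      Matrix.mul_inv_of_invertible, Matrix.inv_mul_of_invertible,
      Matrix.mul_one, Matrix.one_mul,
      Matrix.mul_inv_cancel_left_of_invertible, Matrix.inv_mul_cancel_left_of_invertible]
    abel
  rw [key]
  refine Matrix.PosDef.add_posSemidef (law_posDef_conj hBA ?_) ?_
  · exact (Matrix.isUnit_nonsing_inv_iff.mpr hBu)
  · exact (hA.inv).posSemidef.conjTranspose_mul_mul_same _

private lemma law_smul_posDef {M : Matrix (Fin n) (Fin n) ℝ} (hM : M.PosDef) {t : ℝ}
    (ht : 0 < t) : (t • M).PosDef := by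
  refine posDef_iff_dotProduct_mulVec.mpr ⟨?_, fun x hx => ?_⟩
  · unfold Matrix.IsHermitian
    rw [Matrix.conjTranspose_smul, hM.1.eq]
    simp
  · rw [Matrix.smul_mulVec, dotProduct_smul, smul_eq_mul]
    exact mul_pos ht ((posDef_iff_dotProduct_mulVec.mp hM).2 hx)

private lemma law_shift_posDef {A : Matrix (Fin n) (Fin n) ℝ} (hA : A.PosDef) {t : ℝ}
    (ht : 0 < t) : (A + t • 1).PosDef := by
  refine hA.add_posSemidef ?_
  rw [Matrix.smul_one_eq_diagonal]
  exact Matrix.posSemidef_diagonal_iff.mpr (fun i => ht.le)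

/-- Strict monotonicity of the resolvent map. -/
private lemma law_resolvent_posDef {A B : Matrix (Fin n) (Fin n) ℝ}
    (hA : A.PosDef) (hB : B.PosDef) (hBA : (B - A).PosDef) {t : ℝ} (ht : 0 < t) :
    (B * (B + t • 1)⁻¹ - A * (A + t • 1)⁻¹).PosDef := by
  have hAt := law_shift_posDef hA ht
  have hBt := law_shift_posDef hB ht
  have hAi := hAt.isUnit.invertible
  have hBi := hBt.isUnit.invertible
  have hdiff : ((B + t • 1) - (A + t • 1) : Matrix (Fin n) (Fin n) ℝ).PosDef := by
    simpa using hBA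
  have hmono := law_inv_strict_mono hAt hBt hdiff
  have idR : ∀ (M : Matrix (Fin n) (Fin n) ℝ) (_ : Invertible (M + t • 1)),
      M * (M + t • 1)⁻¹ = 1 - t • (M + t • 1)⁻¹ := by
    intro M h
    have : M = (M + t • 1) - t • 1 := by abel
    nth_rewrite 1 [this]
    rw [Matrix.sub_mul, Matrix.mul_inv_of_invertible, Matrix.smul_mul, Matrix.one_mul]
  rw [idR A hAi, idR B hBi]
  have : (1 - t • (B + t • 1)⁻¹) - (1 - t • (A + t • 1)⁻¹)
      = t • ((A + t • 1)⁻¹ - (B + t • 1)⁻¹) := by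
    rw [smul_sub]; abel
  rw [this]
  exact law_smul_posDef hmono ht

private lemma law_conj_mul_conj {U : Matrix (Fin n) (Fin n) ℝ} (hU' : star U * U = 1)
    (d e : Fin n → ℝ) :
    (U * diagonal d * star U) * (U * diagonal e * star U)
      = U * diagonal (fun i => d i * e i) * star U := by
  have : U * diagonal d * star U * (U * diagonal e * star U)
      = U * (diagonal d * (star U * U) * diagonal e) * star U := by
    noncomm_ring
  rw [this, hU', Matrix.mul_one, Matrix.diagonal_mul_diagonal]

private lemma law_conj_inv {U : Matrix (Fin n) (Fin n) ℝ} (hU : U * star U = 1)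
    (hU' : star U * U = 1) {d : Fin n → ℝ} (hd : ∀ i, d i ≠ 0) :
    (U * diagonal d * star U)⁻¹ = U * diagonal (fun i => (d i)⁻¹) * star U := by
  apply Matrix.inv_eq_right_inv
  rw [law_conj_mul_conj hU' d]
  have : (fun i => d i * (d i)⁻¹) = fun _ => (1:ℝ) := by
    funext i; exact mul_inv_cancel₀ (hd i)
  rw [this, Matrix.diagonal_one, Matrix.mul_one, hU]

private lemma law_quad_conj_diag {U : Matrix (Fin n) (Fin n) ℝ} (d : Fin n → ℝ)
    (v : Fin n → ℝ) :
    v ⬝ᵥ ((U * diagonal d * star U) *ᵥ v) = ∑ i, d i * ((star U *ᵥ v) i)^2 := by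
  rw [← Matrix.mulVec_mulVec, ← Matrix.mulVec_mulVec, Matrix.dotProduct_mulVec]
  have hvec : v ᵥ* U = star U *ᵥ v := by
    ext i
    simp [Matrix.vecMul, Matrix.mulVec, dotProduct, Matrix.star_apply, mul_comm]
  rw [hvec]
  simp only [dotProduct, Matrix.mulVec_diagonal]
  exact Finset.sum_congr rfl (fun i _ => by ring)

end LoewnerAux

section LoewnerAux2

open MeasureTheory Set Real

variable {n : ℕ}

private lemma law_herPow_one {A : Matrix (Fin n) (Fin n) ℝ} (hA : A.IsHermitian) :
    herPow A hA 1 = A := by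
  unfold herPow
  have h1 : (fun i => hA.eigenvalues i ^ (1:ℝ)) = hA.eigenvalues :=
    funext fun i => Real.rpow_one _
  rw [h1]
  have h := hA.spectral_theorem
  have h2 : RCLike.ofReal ∘ hA.eigenvalues = hA.eigenvalues := funext fun i => rfl
  rw [h2] at h
  exact h.symm

private lemma law_herPow_isHermitian {A : Matrix (Fin n) (Fin n) ℝ} (hA : A.IsHermitian)
    (p : ℝ) : (herPow A hA p).IsHermitian := by
  unfold herPow
  have : (star hA.eigenvectorUnitary : Matrix (Fin n) (Fin n) ℝ)
      = (hA.eigenvectorUnitary : Matrix (Fin n) (Fin n) ℝ)ᴴ := rfl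
  rw [this]
  exact isHermitian_mul_mul_conjTranspose _ (isHermitian_diagonal _)

/-- Integral representation of the quadratic form of `herPow`. -/
private lemma law_matrix_integral {A : Matrix (Fin n) (Fin n) ℝ} (hA : A.PosDef)
    {p : ℝ} (hp0 : 0 < p) (hp1 : p < 1) (v : Fin n → ℝ) :
    IntegrableOn (fun t : ℝ => t ^ (p-1) * (v ⬝ᵥ ((A * (A + t • 1)⁻¹) *ᵥ v))) (Ioi 0)
    ∧ ∫ t in Ioi (0:ℝ), t ^ (p-1) * (v ⬝ᵥ ((A * (A + t • 1)⁻¹) *ᵥ v))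
      = (∫ t in Ioi (0:ℝ), t ^ (p-1) * (1/(1+t))) * (v ⬝ᵥ (herPow A hA.1 p *ᵥ v)) := by
  set U : Matrix (Fin n) (Fin n) ℝ := (hA.1.eigenvectorUnitary : Matrix (Fin n) (Fin n) ℝ)
    with hUdef
  have hU : U * star U = 1 := Matrix.mem_unitaryGroup_iff.mp hA.1.eigenvectorUnitary.2
  have hU' : star U * U = 1 := Matrix.mem_unitaryGroup_iff'.mp hA.1.eigenvectorUnitary.2
  set lam : Fin n → ℝ := hA.1.eigenvalues with hlam
  have hlampos : ∀ i, 0 < lam i := fun i => hA.eigenvalues_pos i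
  set w : Fin n → ℝ := star U *ᵥ v with hw
  have hspec : A = U * diagonal lam * star U := by
    have h := hA.1.spectral_theorem
    have : RCLike.ofReal ∘ hA.1.eigenvalues = lam := funext fun i => rfl
    rw [this] at h
    exact h
  have step1 : ∀ t ∈ Ioi (0:ℝ),
      v ⬝ᵥ ((A * (A + t • 1)⁻¹) *ᵥ v) = ∑ i, (lam i / (lam i + t)) * (w i)^2 := by
    intro t ht
    have ht0 : (0:ℝ) < t := ht
    have hshift : A + t • 1 = U * diagonal (fun i => lam i + t) * star U := by
      have hsm : (t • 1 : Matrix (Fin n) (Fin n) ℝ)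
          = U * Matrix.diagonal (fun _ => t) * star U := by
        rw [← Matrix.smul_one_eq_diagonal]
        rw [Matrix.mul_smul, Matrix.mul_one, Matrix.smul_mul, hU]
      rw [hspec, hsm, ← Matrix.add_mul, ← Matrix.mul_add, Matrix.diagonal_add]
    have hinv : (A + t • 1)⁻¹ = U * diagonal (fun i => (lam i + t)⁻¹) * star U := by
      rw [hshift]
      exact law_conj_inv hU hU' (fun i => by have := hlampos i; positivity)
    have hprod : A * (A + t • 1)⁻¹
        = U * diagonal (fun i => lam i * (lam i + t)⁻¹) * star U := by
      rw [hinv]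
      nth_rewrite 1 [hspec]
      exact law_conj_mul_conj hU' _ _
    rw [hprod, law_quad_conj_diag]
    exact Finset.sum_congr rfl (fun i _ => by rw [div_eq_mul_inv])
  set F : ℝ → ℝ := fun t => ∑ i, (w i)^2 * (t ^ (p-1) * (lam i / (lam i + t))) with hF
  have hFeq : EqOn (fun t : ℝ => t ^ (p-1) * (v ⬝ᵥ ((A * (A + t • 1)⁻¹) *ᵥ v))) F (Ioi 0) := by
    intro t ht
    simp only [hF]
    rw [step1 t ht, Finset.mul_sum]
    exact Finset.sum_congr rfl (fun i _ => by ring)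
  have hFint : IntegrableOn F (Ioi 0) :=
    integrable_finset_sum _ (fun i _ =>
      ((law_kernelIntegrable hp0 hp1 (hlampos i)).const_mul _))
  have hint : IntegrableOn
      (fun t : ℝ => t ^ (p-1) * (v ⬝ᵥ ((A * (A + t • 1)⁻¹) *ᵥ v))) (Ioi 0) :=
    hFint.congr_fun (fun t ht => (hFeq ht).symm) measurableSet_Ioi
  refine ⟨hint, ?_⟩
  rw [setIntegral_congr_fun measurableSet_Ioi hFeq]
  rw [integral_finset_sum _ (fun i _ =>
      ((law_kernelIntegrable hp0 hp1 (hlampos i)).const_mul _))]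
  have hqf : v ⬝ᵥ (herPow A hA.1 p *ᵥ v) = ∑ i, lam i ^ p * (w i)^2 :=
    law_quad_conj_diag _ v
  rw [hqf, Finset.mul_sum]
  refine Finset.sum_congr rfl (fun i _ => ?_)
  rw [integral_const_mul, law_kernelScale hp0 hp1 (hlampos i)]
  ring

end LoewnerAux2

/-- Löwner's strict monotonicity of the matrix power `t ↦ t^p`,
`0 < p ≤ 1`: if `A, B` are symmetric positive definite and `B - A > 0`, then
`B^p - A^p > 0`. -/
theorem loewner_strict_monotonicity_rpow {n : ℕ}
    (A B : Matrix (Fin n) (Fin n) ℝ)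
    (hA : A.PosDef) (hB : B.PosDef) (hBA : (B - A).PosDef)
    (p : ℝ) (hp0 : 0 < p) (hp1 : p ≤ 1) :
    (herPow B hB.1 p - herPow A hA.1 p).PosDef := by
  open MeasureTheory Set Real in
  rcases eq_or_lt_of_le hp1 with hp1 | hp1
  · rw [hp1, law_herPow_one hA.1, law_herPow_one hB.1]
    exact hBA
  refine posDef_iff_dotProduct_mulVec.mpr ⟨(law_herPow_isHermitian hB.1 p).sub (law_herPow_isHermitian hA.1 p), fun v hv => ?_⟩
  obtain ⟨hBint, hBeq⟩ := law_matrix_integral hB hp0 hp1 v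
  obtain ⟨hAint, hAeq⟩ := law_matrix_integral hA hp0 hp1 v
  set I : ℝ := ∫ t in Ioi (0:ℝ), t ^ (p-1) * (1/(1+t)) with hI
  have hIpos : 0 < I := law_kernelPos hp0 hp1
  set g : ℝ → ℝ := fun t =>
    t ^ (p-1) * (v ⬝ᵥ ((B * (B + t • 1)⁻¹ - A * (A + t • 1)⁻¹) *ᵥ v)) with hg
  have hgeq : EqOn g (fun t =>
      (t ^ (p-1) * (v ⬝ᵥ ((B * (B + t • 1)⁻¹) *ᵥ v)))
      - (t ^ (p-1) * (v ⬝ᵥ ((A * (A + t • 1)⁻¹) *ᵥ v)))) (Ioi 0) := by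
    intro t ht
    simp only [hg, Matrix.sub_mulVec, dotProduct_sub]
    ring
  have hsub : IntegrableOn (fun t : ℝ =>
      (t ^ (p-1) * (v ⬝ᵥ ((B * (B + t • 1)⁻¹) *ᵥ v)))
      - (t ^ (p-1) * (v ⬝ᵥ ((A * (A + t • 1)⁻¹) *ᵥ v)))) (Ioi 0) := hBint.sub hAint
  have hgint : IntegrableOn g (Ioi 0) :=
    hsub.congr_fun (fun t ht => (hgeq ht).symm) measurableSet_Ioi
  have hgval : ∫ t in Ioi (0:ℝ), g t
      = I * (v ⬝ᵥ (herPow B hB.1 p *ᵥ v)) - I * (v ⬝ᵥ (herPow A hA.1 p *ᵥ v)) := by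
    rw [setIntegral_congr_fun measurableSet_Ioi hgeq, integral_sub hBint hAint, hBeq, hAeq]
  have hgpos : ∀ t ∈ Ioi (0:ℝ), 0 < g t := by
    intro t ht
    have ht0 : (0:ℝ) < t := ht
    have hres := law_resolvent_posDef hA hB hBA ht0
    have := (posDef_iff_dotProduct_mulVec.mp hres).2 hv
    rw [star_trivial] at this
    exact mul_pos (Real.rpow_pos_of_pos ht0 _) this
  have hintpos : 0 < ∫ t in Ioi (0:ℝ), g t := by
    rw [setIntegral_pos_iff_support_of_nonneg_ae ?_ hgint]
    · refine lt_of_lt_of_le ?_ (measure_mono (fun t ht => ⟨(hgpos t ht).ne', ht⟩))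
      rw [Real.volume_Ioi]
      exact ENNReal.zero_lt_top
    · filter_upwards [ae_restrict_mem measurableSet_Ioi] with t ht
      exact (hgpos t ht).le
  rw [hgval] at hintpos
  have hq : 0 < v ⬝ᵥ (herPow B hB.1 p *ᵥ v) - v ⬝ᵥ (herPow A hA.1 p *ᵥ v) := by
    nlinarith
  rw [star_trivial, Matrix.sub_mulVec, dotProduct_sub]
  exact hq
end
end
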